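/- arXiv:2004.13442 — 3 statements merged into one kernel-verified Lean document; each statement's English description precedes it below -/
import Mathlib

section
/- Let G be a connected Δ-regular bipartite graph with parts V⁰, V¹ of size n each and second adjacency eigenvalue at most λ. Let ρ > 0, i ∈ {0,1}, and let S ⊆ Vⁱ with |S| ≤ ρn. Then the vertex boundary satisfies |∂S| ≥ |S| / (ρ + (λ²/Δ²)(1 − ρ)). -/
open Finset Matrix
open scoped RealInnerProductSpace

lemma pf_const {V : Type*} [Fintype V] [DecidableEq V] [Nonempty V]
    {G : SimpleGraph V} [DecidableRel G.Adj] (hconn : G.Connected)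
    {Δ : ℕ} (hreg : ∀ v, G.degree v = Δ)
    {w : V → ℝ} (hw : G.adjMatrix ℝ *ᵥ w = (Δ : ℝ) • w) :
    ∀ u v : V, w u = w v := by
  obtain ⟨u₀, -, hu₀⟩ := Finset.exists_max_image Finset.univ w
    ⟨Classical.arbitrary V, Finset.mem_univ _⟩
  have step : ∀ a b : V, w a = w u₀ → G.Adj a b → w b = w u₀ := by
    intro a b ha hab
    have hsum : ∑ c ∈ G.neighborFinset a, w c = (Δ : ℝ) * w u₀ := by
      have h := congrFun hw a
      simp only [SimpleGraph.adjMatrix_mulVec_apply, Pi.smul_apply, smul_eq_mul] at h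
      rw [h, ha]
    have h0 : ∑ c ∈ G.neighborFinset a, (w u₀ - w c) = 0 := by
      rw [Finset.sum_sub_distrib, hsum, Finset.sum_const,
        SimpleGraph.card_neighborFinset_eq_degree, hreg, nsmul_eq_mul, sub_self]
    have hnn : ∀ c ∈ G.neighborFinset a, 0 ≤ w u₀ - w c := fun c _ =>
      sub_nonneg.2 (hu₀ c (Finset.mem_univ c))
    have := (Finset.sum_eq_zero_iff_of_nonneg hnn).1 h0 b
      (by rwa [SimpleGraph.mem_neighborFinset])
    linarith
  have key : ∀ {a b : V}, G.Walk a b → w a = w u₀ → w b = w u₀ := by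
    intro a b p
    induction p with
    | nil => exact id
    | cons h q ih => exact fun ha => ih (step _ _ ha h)
  intro u v
  obtain ⟨p⟩ := hconn.preconnected u₀ u
  obtain ⟨q⟩ := hconn.preconnected u₀ v
  rw [key p rfl, key q rfl]

lemma eig_structure {n Δ : ℕ} (hn : 0 < n) (hΔ : 0 < Δ)
    {G : SimpleGraph (Fin n ⊕ Fin n)} [DecidableRel G.Adj]
    (hconn : G.Connected)
    (hbip : ∀ a b : Fin n, ¬ G.Adj (Sum.inl a) (Sum.inl b) ∧ ¬ G.Adj (Sum.inr a) (Sum.inr b))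
    (hreg : ∀ v, G.degree v = Δ) {μ : ℝ} (hμ : μ ^ 2 = (Δ : ℝ) ^ 2)
    {v : (Fin n ⊕ Fin n) → ℝ} (hv : G.adjMatrix ℝ *ᵥ v = μ • v) :
    ∃ t : ℝ, (∀ a, v (Sum.inl a) = t) ∧ (∀ a, v (Sum.inr a) = ((Δ : ℝ) / μ) * t) := by
  have hΔ0 : ((Δ : ℝ)) ≠ 0 := Nat.cast_ne_zero.2 hΔ.ne'
  have hμ0 : μ ≠ 0 := by
    intro h; rw [h] at hμ; exact hΔ0 (by nlinarith [sq_nonneg (Δ : ℝ)] : (Δ:ℝ) = 0)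
  set s : ℝ := μ / Δ with hs
  have hs0 : s ≠ 0 := div_ne_zero hμ0 hΔ0
  have hsμ : s * μ = (Δ : ℝ) := by
    rw [hs, div_mul_eq_mul_div, div_eq_iff hΔ0]
    nlinarith [hμ]
  have hΔs : (Δ : ℝ) * s = μ := by
    rw [hs]; field_simp
  set w : (Fin n ⊕ Fin n) → ℝ := Sum.elim (fun a => v (Sum.inl a)) (fun a => s * v (Sum.inr a))
    with hwdef
  have hw : G.adjMatrix ℝ *ᵥ w = (Δ : ℝ) • w := by
    funext u
    rw [SimpleGraph.adjMatrix_mulVec_apply]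
    have hv' := congrFun hv u
    rw [SimpleGraph.adjMatrix_mulVec_apply] at hv'
    cases u with
    | inl a =>
      have hcongr : ∀ c ∈ G.neighborFinset (Sum.inl a), w c = s * v c := by
        intro c hc
        rw [SimpleGraph.mem_neighborFinset] at hc
        cases c with
        | inl b => exact absurd hc (hbip a b).1
        | inr b => rfl
      rw [Finset.sum_congr rfl hcongr, ← Finset.mul_sum, hv']
      simp only [Pi.smul_apply, smul_eq_mul, hwdef, Sum.elim_inl]
      rw [← mul_assoc, hsμ]
    | inr a =>
      have hcongr : ∀ c ∈ G.neighborFinset (Sum.inr a), w c = v c := by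
        intro c hc
        rw [SimpleGraph.mem_neighborFinset] at hc
        cases c with
        | inl b => rfl
        | inr b => exact absurd (G.adj_symm hc) (hbip b a).2
      rw [Finset.sum_congr rfl hcongr, hv']
      simp only [Pi.smul_apply, smul_eq_mul, hwdef, Sum.elim_inr]
      rw [← mul_assoc, hΔs]
  have : Nonempty (Fin n ⊕ Fin n) := ⟨Sum.inl ⟨0, hn⟩⟩
  have hc := pf_const hconn hreg hw
  refine ⟨v (Sum.inl ⟨0, hn⟩), fun a => ?_, fun a => ?_⟩
  · exact hc (Sum.inl a) (Sum.inl ⟨0, hn⟩)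
  · have h := hc (Sum.inr a) (Sum.inl ⟨0, hn⟩)
    simp only [hwdef, Sum.elim_inl, Sum.elim_inr] at h
    rw [← h, ← mul_assoc, div_mul_eq_mul_div, hΔs, div_self hμ0, one_mul]

lemma symm_vecMul {n : ℕ} (G : SimpleGraph (Fin n ⊕ Fin n)) [DecidableRel G.Adj]
    (u : (Fin n ⊕ Fin n) → ℝ) :
    u ᵥ* (G.adjMatrix ℝ) = (G.adjMatrix ℝ) *ᵥ u := by
  funext c
  simp only [Matrix.vecMul, Matrix.mulVec, dotProduct]
  refine Finset.sum_congr rfl fun r _ => ?_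
  simp [SimpleGraph.adjMatrix_apply, SimpleGraph.adj_comm, mul_comm]

lemma repr_mulVec {n : ℕ} (G : SimpleGraph (Fin n ⊕ Fin n)) [DecidableRel G.Adj]
    (hA : (G.adjMatrix ℝ).IsHermitian) (x : EuclideanSpace ℝ (Fin n ⊕ Fin n))
    (j : Fin n ⊕ Fin n) :
    hA.eigenvectorBasis.repr (WithLp.toLp 2 ((G.adjMatrix ℝ) *ᵥ x) : EuclideanSpace ℝ (Fin n ⊕ Fin n)) j
      = hA.eigenvalues j * hA.eigenvectorBasis.repr x j := by
  rw [OrthonormalBasis.repr_apply_apply, OrthonormalBasis.repr_apply_apply]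
  simp only [PiLp.inner_apply, RCLike.inner_apply', starRingEnd_apply, star_trivial]
  have h1 : ∑ z, (hA.eigenvectorBasis j) z * (WithLp.toLp 2 ((G.adjMatrix ℝ) *ᵥ x) : EuclideanSpace ℝ (Fin n ⊕ Fin n)) z
      = (⇑(hA.eigenvectorBasis j)) ⬝ᵥ ((G.adjMatrix ℝ) *ᵥ x) := rfl
  rw [h1, Matrix.dotProduct_mulVec, symm_vecMul, hA.mulVec_eigenvectorBasis,
    smul_dotProduct]
  simp only [smul_eq_mul]
  rfl


lemma final_algebra {s nR dR lam ρ bc : ℝ} (hs : 0 < s) (hn : 0 < nR) (hd : 0 < dR)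
    (hlam : 0 < lam) (hld : lam < dR) (hρ : 0 < ρ) (hsρ : s ≤ ρ * nR) (hbc : 0 ≤ bc)
    (key : (dR * s) ^ 2 ≤ bc * (lam ^ 2 * s + (dR ^ 2 - lam ^ 2) * (s ^ 2 / nR))) :
    s / (ρ + lam ^ 2 / dR ^ 2 * (1 - ρ)) ≤ bc := by
  have hlamsq : lam ^ 2 < dR ^ 2 := by nlinarith
  have hD : 0 < ρ + lam ^ 2 / dR ^ 2 * (1 - ρ) := by
    have hc1 : lam ^ 2 / dR ^ 2 < 1 := (div_lt_one (by positivity)).2 hlamsq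
    have hc0 : 0 < lam ^ 2 / dR ^ 2 := by positivity
    nlinarith
  have hn0 : nR ≠ 0 := hn.ne'
  have key2 : dR ^ 2 * s ^ 2 * nR ≤ bc * (lam ^ 2 * s * nR + (dR ^ 2 - lam ^ 2) * s ^ 2) := by
    have h := mul_le_mul_of_nonneg_right key (le_of_lt hn)
    calc dR ^ 2 * s ^ 2 * nR = (dR * s) ^ 2 * nR := by ring
      _ ≤ (bc * (lam ^ 2 * s + (dR ^ 2 - lam ^ 2) * (s ^ 2 / nR))) * nR := h
      _ = bc * (lam ^ 2 * s * nR + (dR ^ 2 - lam ^ 2) * (s ^ 2 / nR * nR)) := by ring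
      _ = bc * (lam ^ 2 * s * nR + (dR ^ 2 - lam ^ 2) * s ^ 2) := by
          rw [div_mul_cancel₀ _ hn0]
  rw [div_le_iff₀ hD]
  have hgoal2 : s * dR ^ 2 ≤ bc * (lam ^ 2 + ρ * (dR ^ 2 - lam ^ 2)) := by
    nlinarith [key2, mul_pos hs hn,
      mul_nonneg (mul_nonneg hbc (le_of_lt (by nlinarith : (0:ℝ) < dR ^ 2 - lam ^ 2)))
        (mul_nonneg (sub_nonneg.2 hsρ) (le_of_lt hs))]
  have hDeq : (ρ + lam ^ 2 / dR ^ 2 * (1 - ρ)) * dR ^ 2 = lam ^ 2 + ρ * (dR ^ 2 - lam ^ 2) := by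
    field_simp
    ring
  have hΔsq : (0:ℝ) < dR ^ 2 := by positivity
  nlinarith [hgoal2, hDeq]

set_option maxHeartbeats 2000000 in
/-- Tanner's vertex-expansion bound for bipartite regular expanders. -/
theorem stmt2 (n Δ : ℕ) (lam ρ : ℝ) (hn : 0 < n) (hΔ : 3 ≤ Δ) (hlam0 : 0 < lam)
    (hlamΔ : lam < Δ) (hρ : 0 < ρ)
    (G : SimpleGraph (Fin n ⊕ Fin n)) [DecidableRel G.Adj]
    (hconn : G.Connected)
    (hbip : ∀ a b : Fin n, ¬ G.Adj (Sum.inl a) (Sum.inl b) ∧ ¬ G.Adj (Sum.inr a) (Sum.inr b))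
    (hreg : ∀ v, G.degree v = Δ)
    (hspec : ∀ μ ∈ spectrum ℝ (G.adjMatrix ℝ), μ ≠ (Δ : ℝ) → μ ≠ -(Δ : ℝ) → |μ| ≤ lam)
    (i : Bool) (S : Finset (Fin n)) (hScard : (S.card : ℝ) ≤ ρ * n) :
    -- embed `S` into side `i` of the bipartition
    let emb : Fin n → Fin n ⊕ Fin n := fun a => if i then Sum.inr a else Sum.inl a
    let Semb : Finset (Fin n ⊕ Fin n) := S.image emb
    let bdry : Finset (Fin n ⊕ Fin n) :=
      Finset.univ.filter (fun w => w ∉ Semb ∧ ∃ v ∈ Semb, G.Adj w v)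
    (S.card : ℝ) / (ρ + (lam ^ 2 / (Δ : ℝ) ^ 2) * (1 - ρ)) ≤ (bdry.card : ℝ) := by
  intro emb Semb bdry
  classical
  have hΔpos : 0 < Δ := by omega
  have hΔR : (0:ℝ) < (Δ : ℝ) := by exact_mod_cast hΔpos
  have hnR : (0:ℝ) < (n : ℝ) := by exact_mod_cast hn
  have hlamsq : lam ^ 2 < (Δ:ℝ) ^ 2 := by nlinarith
  -- denominator positivity
  have hD : 0 < ρ + (lam ^ 2 / (Δ : ℝ) ^ 2) * (1 - ρ) := by
    have hc1 : lam ^ 2 / (Δ:ℝ) ^ 2 < 1 := (div_lt_one (by positivity)).2 hlamsq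
    have hc0 : 0 < lam ^ 2 / (Δ:ℝ) ^ 2 := by positivity
    nlinarith
  rcases Nat.eq_zero_or_pos S.card with hS0 | hSpos
  · rw [hS0]
    simp only [Nat.cast_zero, zero_div]
    positivity
  have hsR : (0:ℝ) < (S.card : ℝ) := by exact_mod_cast hSpos
  -- injectivity of the embedding
  have hembinj : Function.Injective emb := by
    cases i
    · intro a b h; simpa [emb] using h
    · intro a b h; simpa [emb] using h
  have hSembcard : (Semb.card : ℝ) = (S.card : ℝ) := by
    rw [show Semb = S.image emb from rfl, Finset.card_image_of_injective _ hembinj]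
  -- Hermitian matrix and eigen data
  have hA : (G.adjMatrix ℝ).IsHermitian := by
    ext a c
    simp [Matrix.conjTranspose_apply, SimpleGraph.adjMatrix_apply, SimpleGraph.adj_comm]
  set b := hA.eigenvectorBasis with hb
  set ev := hA.eigenvalues with hev
  have hinner : ∀ u w : EuclideanSpace ℝ (Fin n ⊕ Fin n), ⟪u, w⟫ = ∑ z, u z * w z := by
    intro u w
    rw [PiLp.inner_apply]; exact Finset.sum_congr rfl fun z _ => Real.inner_apply _ _
  -- indicator vector
  set x : EuclideanSpace ℝ (Fin n ⊕ Fin n) := WithLp.toLp 2 (fun u => if u ∈ Semb then (1:ℝ) else 0) with hx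
  set y : EuclideanSpace ℝ (Fin n ⊕ Fin n) := WithLp.toLp 2 ((G.adjMatrix ℝ) *ᵥ x) with hy
  have hrepr : ∀ (z : EuclideanSpace ℝ (Fin n ⊕ Fin n)) j, b.repr z j = ∑ u, b j u * z u := by
    intro z j
    rw [OrthonormalBasis.repr_apply_apply, hinner]
  -- Parseval
  have hParseval : ∀ z : EuclideanSpace ℝ (Fin n ⊕ Fin n),
      ∑ j, (b.repr z j) ^ 2 = ∑ u, (z u) ^ 2 := by
    intro z
    have h := b.repr.inner_map_map z z
    rw [hinner, hinner] at h
    simpa [sq] using h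
  have hxsq : ∑ u, (x u) ^ 2 = (S.card : ℝ) := by
    rw [← hSembcard]
    simp only [hx]
    rw [show ∑ u, (if u ∈ Semb then (1:ℝ) else 0) ^ 2
        = ∑ u, (if u ∈ Semb then (1:ℝ) else 0) from by
      refine Finset.sum_congr rfl fun u _ => ?_
      by_cases h : u ∈ Semb <;> simp [h]]
    rw [Finset.sum_ite_mem, Finset.univ_inter, Finset.sum_const, nsmul_eq_mul, mul_one]
  -- bad eigenvalue set
  set Bad : Finset (Fin n ⊕ Fin n) :=
    Finset.univ.filter (fun j => ev j = (Δ:ℝ) ∨ ev j = -(Δ:ℝ)) with hBad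
  have hsmall : ∀ j ∉ Bad, (ev j) ^ 2 ≤ lam ^ 2 := by
    intro j hj
    simp only [hBad, Finset.mem_filter, Finset.mem_univ, true_and, not_or] at hj
    have := hspec (ev j) (hA.eigenvalues_mem_spectrum_real j) hj.1 hj.2
    calc (ev j) ^ 2 = |ev j| ^ 2 := (sq_abs _).symm
      _ ≤ lam ^ 2 := by nlinarith [abs_nonneg (ev j)]
  -- structure of bad eigenvectors
  have hstruct : ∀ j ∈ Bad, ∃ t : ℝ, (∀ a, b j (Sum.inl a) = t) ∧
      (∀ a, b j (Sum.inr a) = ((Δ:ℝ) / ev j) * t) ∧ t ^ 2 = 1 / (2 * n) := by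
    intro j hj
    simp only [hBad, Finset.mem_filter, Finset.mem_univ, true_and] at hj
    have hμsq : (ev j) ^ 2 = (Δ:ℝ) ^ 2 := by
      rcases hj with h | h <;> rw [h] <;> ring
    obtain ⟨t, ht1', ht2'⟩ := eig_structure hn hΔpos hconn hbip hreg hμsq
      (hA.mulVec_eigenvectorBasis j)
    have ht1 : ∀ a, b j (Sum.inl a) = t := fun a => ht1' a
    have ht2 : ∀ a, b j (Sum.inr a) = ((Δ:ℝ) / ev j) * t := fun a => ht2' a
    have hnorm : ∑ u, (b j u) ^ 2 = 1 := by
      have h1 : ‖b j‖ = 1 := b.orthonormal.1 j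
      have h2 : ⟪b j, b j⟫ = ∑ u, b j u * b j u := hinner _ _
      rw [real_inner_self_eq_norm_sq, h1] at h2
      simpa [sq] using h2.symm
    have hfrac : ((Δ:ℝ) / ev j) ^ 2 = 1 := by
      have : (ev j) ≠ 0 := by
        intro h; rw [h] at hμsq; nlinarith
      field_simp
      linarith [hμsq]
    have hsum : ∑ u : Fin n ⊕ Fin n, (b j u) ^ 2 = 2 * n * t ^ 2 := by
      rw [Fintype.sum_sum_type]
      have e1 : ∀ a : Fin n, (b j (Sum.inl a)) ^ 2 = t ^ 2 := fun a => by rw [ht1]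
      have e2 : ∀ a : Fin n, (b j (Sum.inr a)) ^ 2 = t ^ 2 := fun a => by
        rw [ht2]; rw [mul_pow, hfrac, one_mul]
      rw [Finset.sum_congr rfl (fun a _ => e1 a), Finset.sum_congr rfl (fun a _ => e2 a)]
      simp [Finset.sum_const]
      ring
    refine ⟨t, ht1, ht2, ?_⟩
    rw [hsum] at hnorm
    field_simp
    linarith
  -- value of coefficients on bad set
  have hc2 : ∀ j ∈ Bad, (b.repr x j) ^ 2 = (S.card : ℝ) ^ 2 * (1 / (2 * n)) := by
    intro j hj
    obtain ⟨t, ht1, ht2, ht3⟩ := hstruct j hj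
    have hμsq : (ev j) ^ 2 = (Δ:ℝ) ^ 2 := by
      simp only [hBad, Finset.mem_filter, Finset.mem_univ, true_and] at hj
      rcases hj with h | h <;> rw [h] <;> ring
    have hev0 : ev j ≠ 0 := by intro h; rw [h] at hμsq; nlinarith
    have hfrac : ((Δ:ℝ) / ev j) ^ 2 = 1 := by field_simp; linarith [hμsq]
    have hx_sum : b.repr x j = ∑ u ∈ Semb, b j u := by
      rw [hrepr]
      simp only [hx, mul_ite, mul_one, mul_zero]
      rw [Finset.sum_ite_mem, Finset.univ_inter]
    have himg : ∑ u ∈ Semb, b j u = ∑ a ∈ S, b j (emb a) := by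
      rw [show Semb = S.image emb from rfl]
      exact Finset.sum_image (fun a _ c _ h => hembinj h)
    rw [hx_sum, himg]
    cases i
    · have : ∀ a ∈ S, b j (emb a) = t := fun a _ => by
        simp only [emb, Bool.false_eq_true, if_false]; exact ht1 a
      rw [Finset.sum_congr rfl this, Finset.sum_const, nsmul_eq_mul]
      rw [← ht3]; ring
    · have : ∀ a ∈ S, b j (emb a) = ((Δ:ℝ) / ev j) * t := fun a _ => by
        simp only [emb, if_true]; exact ht2 a
      rw [Finset.sum_congr rfl this, Finset.sum_const, nsmul_eq_mul]
      rw [mul_pow, mul_pow, hfrac, ← ht3]; ring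
  -- at most two bad indices
  have hBadcard : Bad.card ≤ 2 := by
    have hc : Bad.card ≤ (Finset.univ : Finset Bool).card := by
      apply Finset.card_le_card_of_injOn (fun j => if ev j = (Δ:ℝ) then true else false)
        (fun _ _ => Finset.mem_univ _)
      intro j hj k hk hjk
      have hjB : j ∈ Bad := hj
      have hkB : k ∈ Bad := hk
      have hj' : ev j = (Δ:ℝ) ∨ ev j = -(Δ:ℝ) := (Finset.mem_filter.mp hjB).2
      have hk' : ev k = (Δ:ℝ) ∨ ev k = -(Δ:ℝ) := (Finset.mem_filter.mp hkB).2
      by_contra hne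
      have hsame : ev j = ev k := by
        by_cases h1 : ev j = (Δ:ℝ) <;> by_cases h2 : ev k = (Δ:ℝ)
        · rw [h1, h2]
        · simp [h1, h2] at hjk
        · simp [h1, h2] at hjk
        · rcases hj' with h | h
          · exact absurd h h1
          · rcases hk' with h' | h'
            · exact absurd h' h2
            · rw [h, h']
      obtain ⟨t, ht1, ht2, ht3⟩ := hstruct j hjB
      obtain ⟨t', ht1', ht2', ht3'⟩ := hstruct k hkB
      have horth : ⟪b j, b k⟫ = 0 := b.orthonormal.2 hne
      rw [hinner, Fintype.sum_sum_type] at horth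
      have hμsq : (ev j) ^ 2 = (Δ:ℝ) ^ 2 := by
        rcases hj' with h | h <;> rw [h] <;> ring
      have hev0 : ev j ≠ 0 := by intro h; rw [h] at hμsq; nlinarith
      have hfrac : ((Δ:ℝ) / ev j) ^ 2 = 1 := by field_simp; linarith [hμsq]
      have e1 : ∑ a : Fin n, b j (Sum.inl a) * b k (Sum.inl a) = (n:ℝ) * (t * t') := by
        rw [Finset.sum_congr rfl (fun a _ => by rw [ht1 a, ht1' a])]
        simp [Finset.sum_const]
      have e2 : ∑ a : Fin n, b j (Sum.inr a) * b k (Sum.inr a) = (n:ℝ) * (t * t') := by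
        rw [Finset.sum_congr rfl (fun a _ => by rw [ht2 a, ht2' a])]
        rw [Finset.sum_const, Finset.card_univ, Fintype.card_fin, nsmul_eq_mul]
        rw [← hsame]
        rw [show ((Δ:ℝ)/ev j * t) * ((Δ:ℝ)/ev j * t') = ((Δ:ℝ)/ev j)^2 * (t * t') from by ring,
          hfrac, one_mul]
      rw [e1, e2] at horth
      have h3 : t * t' = 0 := by
        have h4 : (2 * (n:ℝ)) * (t * t') = 0 := by linarith
        exact (mul_eq_zero.mp h4).resolve_left (by positivity : (0:ℝ) < 2 * n).ne'
      have hpos : (0:ℝ) < 1 / (2 * (n:ℝ)) := by positivity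
      rcases mul_eq_zero.mp h3 with h | h
      · rw [h] at ht3; simp at ht3; linarith
      · rw [h] at ht3'; simp at ht3'; linarith
    rw [Finset.card_univ, Fintype.card_bool] at hc
    exact hc
  -- sum over bad indices
  have hsum_Bad : ∑ j ∈ Bad, (b.repr x j) ^ 2 ≤ (S.card : ℝ) ^ 2 / n := by
    calc ∑ j ∈ Bad, (b.repr x j) ^ 2
        ≤ Bad.card • ((S.card : ℝ) ^ 2 * (1 / (2 * n))) :=
          Finset.sum_le_card_nsmul _ _ _ (fun j hj => le_of_eq (hc2 j hj))
      _ = (Bad.card : ℝ) * ((S.card : ℝ) ^ 2 * (1 / (2 * n))) := by rw [nsmul_eq_mul]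
      _ ≤ 2 * ((S.card : ℝ) ^ 2 * (1 / (2 * n))) := by
          apply mul_le_mul_of_nonneg_right _ (mul_nonneg (sq_nonneg _) (by positivity))
          exact_mod_cast hBadcard
      _ = (S.card : ℝ) ^ 2 / n := by ring
  -- main spectral bound
  have hmain : ∑ j, (ev j) ^ 2 * (b.repr x j) ^ 2
      ≤ lam ^ 2 * (S.card : ℝ) + ((Δ:ℝ) ^ 2 - lam ^ 2) * ((S.card : ℝ) ^ 2 / n) := by
    have hstep : ∑ j, (ev j) ^ 2 * (b.repr x j) ^ 2
        ≤ ∑ j, (lam ^ 2 * (b.repr x j) ^ 2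
            + (if j ∈ Bad then ((Δ:ℝ) ^ 2 - lam ^ 2) * (b.repr x j) ^ 2 else 0)) := by
      apply Finset.sum_le_sum
      intro j _
      by_cases hj : j ∈ Bad
      · have hj' : ev j = (Δ:ℝ) ∨ ev j = -(Δ:ℝ) := (Finset.mem_filter.mp hj).2
        have hμsq : (ev j) ^ 2 = (Δ:ℝ) ^ 2 := by rcases hj' with h | h <;> rw [h] <;> ring
        rw [if_pos hj, hμsq]; ring_nf; rfl
      · rw [if_neg hj]
        have := hsmall j hj
        nlinarith [sq_nonneg (b.repr x j)]
    rw [Finset.sum_add_distrib, ← Finset.mul_sum, hParseval, hxsq, ← Finset.sum_filter,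
      Finset.filter_mem_eq_inter, Finset.univ_inter] at hstep
    calc ∑ j, (ev j) ^ 2 * (b.repr x j) ^ 2
        ≤ lam ^ 2 * (S.card:ℝ) + ∑ j ∈ Bad, ((Δ:ℝ) ^ 2 - lam ^ 2) * (b.repr x j) ^ 2 := hstep
      _ ≤ lam ^ 2 * (S.card:ℝ) + ((Δ:ℝ) ^ 2 - lam ^ 2) * ((S.card : ℝ) ^ 2 / n) := by
          rw [← Finset.mul_sum]
          have := mul_le_mul_of_nonneg_left hsum_Bad (le_of_lt (by nlinarith : (0:ℝ) < (Δ:ℝ)^2 - lam^2))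
          linarith
  -- y vanishes off the boundary
  have hy_zero : ∀ u ∉ bdry, y u = 0 := by
    intro u hu
    have hu' : ¬(u ∉ Semb ∧ ∃ v ∈ Semb, G.Adj u v) := by
      intro h
      exact hu (Finset.mem_filter.2 ⟨Finset.mem_univ u, h⟩)
    rw [hy, WithLp.ofLp_toLp, SimpleGraph.adjMatrix_mulVec_apply]
    apply Finset.sum_eq_zero
    intro c hc
    rw [SimpleGraph.mem_neighborFinset] at hc
    by_cases hcS : c ∈ Semb
    · by_cases huS : u ∈ Semb
      · -- both in Semb: contradiction with bipartiteness
        exfalso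
        obtain ⟨a, _, rfl⟩ := Finset.mem_image.mp huS
        obtain ⟨a', _, rfl⟩ := Finset.mem_image.mp hcS
        cases i
        · exact (hbip a a').1 (by simpa [emb] using hc)
        · exact (hbip a a').2 (by simpa [emb] using hc)
      · exact absurd ⟨huS, c, hcS, hc⟩ hu'
    · simp [hx, hcS]
  -- total sum of y
  have hy_total : ∑ u, y u = (Δ:ℝ) * (S.card : ℝ) := by
    have hcol : ∀ c, ∑ u, (G.adjMatrix ℝ) u c = (Δ:ℝ) := by
      intro c
      have h1 : ∀ u, (G.adjMatrix ℝ) u c = if G.Adj c u then (1:ℝ) else 0 := by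
        intro u
        rw [SimpleGraph.adjMatrix_apply]
        by_cases h : G.Adj u c
        · rw [if_pos h, if_pos (G.adj_symm h)]
        · rw [if_neg h, if_neg (fun h' => h (G.adj_symm h'))]
      rw [Finset.sum_congr rfl (fun u _ => h1 u), Finset.sum_boole]
      rw [← SimpleGraph.neighborFinset_eq_filter, SimpleGraph.card_neighborFinset_eq_degree, hreg]
    calc ∑ u, y u = ∑ u, ∑ c, (G.adjMatrix ℝ) u c * x c := rfl
      _ = ∑ c, ∑ u, (G.adjMatrix ℝ) u c * x c := Finset.sum_comm
      _ = ∑ c, (∑ u, (G.adjMatrix ℝ) u c) * x c := by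
          refine Finset.sum_congr rfl fun c _ => ?_
          rw [Finset.sum_mul]
      _ = ∑ c, (Δ:ℝ) * x c := by
          refine Finset.sum_congr rfl fun c _ => ?_
          rw [hcol]
      _ = (Δ:ℝ) * ∑ c, x c := by rw [Finset.mul_sum]
      _ = (Δ:ℝ) * (S.card : ℝ) := by
          congr 1
          rw [← hSembcard]
          simp only [hx]
          rw [Finset.sum_ite_mem, Finset.univ_inter, Finset.sum_const, nsmul_eq_mul, mul_one]
  -- Cauchy–Schwarz
  have hCS : ((Δ:ℝ) * (S.card : ℝ)) ^ 2 ≤ (bdry.card : ℝ) * ∑ u, (y u) ^ 2 := by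
    have hsub : ∑ u, y u = ∑ u ∈ bdry, y u :=
      (Finset.sum_subset (Finset.subset_univ bdry) (fun u _ hu => hy_zero u hu)).symm
    have hcs := Finset.sum_mul_sq_le_sq_mul_sq bdry (fun _ => (1:ℝ)) (fun u => y u)
    simp only [one_pow, one_mul, Finset.sum_const, nsmul_eq_mul, mul_one] at hcs
    calc ((Δ:ℝ) * (S.card : ℝ)) ^ 2 = (∑ u ∈ bdry, y u) ^ 2 := by rw [← hsub, hy_total]
      _ ≤ (bdry.card : ℝ) * ∑ u ∈ bdry, (y u) ^ 2 := hcs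
      _ ≤ (bdry.card : ℝ) * ∑ u, (y u) ^ 2 := by
          apply mul_le_mul_of_nonneg_left _ (Nat.cast_nonneg _)
          exact Finset.sum_le_sum_of_subset_of_nonneg (Finset.subset_univ _)
            (fun u _ _ => sq_nonneg _)
  -- spectral bound on ∑ y²
  have hysq : ∑ u, (y u) ^ 2 ≤ lam ^ 2 * (S.card : ℝ)
      + ((Δ:ℝ) ^ 2 - lam ^ 2) * ((S.card : ℝ) ^ 2 / n) := by
    have h1 : ∑ u, (y u) ^ 2 = ∑ j, (b.repr y j) ^ 2 := (hParseval y).symm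
    have h2 : ∀ j, b.repr y j = ev j * b.repr x j := fun j => repr_mulVec G hA x j
    rw [h1]
    calc ∑ j, (b.repr y j) ^ 2 = ∑ j, (ev j) ^ 2 * (b.repr x j) ^ 2 := by
          refine Finset.sum_congr rfl fun j _ => ?_
          rw [h2 j]; ring
      _ ≤ _ := hmain
  -- final algebra
  have key : ((Δ:ℝ) * (S.card : ℝ)) ^ 2 ≤ (bdry.card : ℝ)
      * (lam ^ 2 * (S.card : ℝ) + ((Δ:ℝ) ^ 2 - lam ^ 2) * ((S.card : ℝ) ^ 2 / n)) :=
    hCS.trans (mul_le_mul_of_nonneg_left hysq (Nat.cast_nonneg _))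
  exact final_algebra hsR hnR hΔR hlam0 hlamΔ hρ hScard (Nat.cast_nonneg _) key
end

section
/- Let G be a Δ-regular bipartite graph with parts of size n and second eigenvalue at most λ, H a symmetric q×q δ-matrix, and ε ∈ (0,1) with ε ≥ 2qλ/Δ and ε² ≥ 8q²log(q)/(Δ log(1/δ)). Then for every configuration σ : V → [q] whose associated pair (B₀(σ), B₁(σ)) is not a biclique of H, the weight satisfies w_{G,H}(σ) ≤ δ^{Δε²n/(2q²)}. -/
open Finset
open scoped Classical

def IsDeltaMatrix {q : ℕ} (δ : ℝ) (H : Matrix (Fin q) (Fin q) ℝ) : Prop :=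
  (∀ i j, 0 ≤ H i j) ∧ (∃ i j, H i j = 1) ∧ (∀ i j, H i j = 1 ∨ H i j ≤ δ)

def IsBiclique {q : ℕ} (H : Matrix (Fin q) (Fin q) ℝ) (B0 B1 : Finset (Fin q)) : Prop :=
  ∀ i ∈ B0, ∀ j ∈ B1, H i j = 1

/-- Weight of a spin configuration on a bipartite graph (each edge counted once). -/
def bipWeight {n q : ℕ} (G : SimpleGraph (Fin n ⊕ Fin n)) [DecidableRel G.Adj]
    (H : Matrix (Fin q) (Fin q) ℝ) (σ : Fin n ⊕ Fin n → Fin q) : ℝ :=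
  ∏ u : Fin n, ∏ v : Fin n,
    if G.Adj (Sum.inl u) (Sum.inr v) then H (σ (Sum.inl u)) (σ (Sum.inr v)) else 1

/-- The set of spins used by `σ` on side `0` (resp. `1`) by at least `εn/q` vertices. -/
noncomputable def popularSpins0 {n q : ℕ} (ε : ℝ) (σ : Fin n ⊕ Fin n → Fin q) : Finset (Fin q) :=
  Finset.univ.filter (fun j =>
    ε * n / q ≤ ((Finset.univ.filter (fun u : Fin n => σ (Sum.inl u) = j)).card : ℝ))

noncomputable def popularSpins1 {n q : ℕ} (ε : ℝ) (σ : Fin n ⊕ Fin n → Fin q) : Finset (Fin q) :=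
  Finset.univ.filter (fun j =>
    ε * n / q ≤ ((Finset.univ.filter (fun u : Fin n => σ (Sum.inr u) = j)).card : ℝ))

set_option maxHeartbeats 1000000

section Aux
open Matrix

lemma eig_const {V : Type*} [Fintype V] [DecidableEq V] (G : SimpleGraph V) [DecidableRel G.Adj]
    (hconn : G.Connected) (Δ : ℕ) (hreg : ∀ v, G.degree v = Δ) (v : V → ℝ)
    (hv : G.adjMatrix ℝ *ᵥ v = (Δ : ℝ) • v) : ∃ c, ∀ u, v u = c := by
  have hne : Nonempty V := hconn.nonempty
  obtain ⟨u₀, -, hu₀⟩ := Finset.exists_max_image Finset.univ v ⟨Classical.arbitrary V, mem_univ _⟩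
  set M := v u₀ with hM
  have key : ∀ u, v u = M → ∀ w, G.Adj u w → v w = M := by
    intro u hu w hw
    by_contra hne'
    have hlt : v w < M := lt_of_le_of_ne (hu₀ w (mem_univ w)) hne'
    have hsum : ∑ x ∈ G.neighborFinset u, v x = (Δ : ℝ) * M := by
      have := congrFun hv u
      rw [SimpleGraph.adjMatrix_mulVec_apply] at this
      simp [this, hu]
    have hlt2 : ∑ x ∈ G.neighborFinset u, v x < ∑ x ∈ G.neighborFinset u, (fun _ => M) x := by
      apply Finset.sum_lt_sum (fun i _ => hu₀ i (mem_univ i))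
      exact ⟨w, by rwa [SimpleGraph.mem_neighborFinset], hlt⟩
    rw [hsum] at hlt2
    simp only [Finset.sum_const, nsmul_eq_mul, SimpleGraph.card_neighborFinset_eq_degree,
      hreg] at hlt2
    exact lt_irrefl _ hlt2
  have h2 : ∀ (a b : V) (p : G.Walk a b), v a = M → v b = M := by
    intro a b p
    induction p with
    | nil => exact id
    | cons h q ih => exact fun ha => ih (key _ ha _ h)
  exact ⟨M, fun u => h2 u₀ u (hconn.preconnected u₀ u).some rfl⟩

lemma eig_neg {n : ℕ} (Δ : ℕ) (G : SimpleGraph (Fin n ⊕ Fin n)) [DecidableRel G.Adj]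
    (hconn : G.Connected)
    (hbip : ∀ a b : Fin n, ¬ G.Adj (Sum.inl a) (Sum.inl b) ∧ ¬ G.Adj (Sum.inr a) (Sum.inr b))
    (hreg : ∀ v, G.degree v = Δ) (v : (Fin n ⊕ Fin n) → ℝ)
    (hv : G.adjMatrix ℝ *ᵥ v = (-(Δ : ℝ)) • v) :
    ∃ c, (∀ a, v (Sum.inl a) = c) ∧ (∀ a, v (Sum.inr a) = -c) := by
  set w : (Fin n ⊕ Fin n) → ℝ :=
    Sum.elim (fun a => v (Sum.inl a)) (fun a => -(v (Sum.inr a))) with hw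
  have keyl : ∀ (f : (Fin n ⊕ Fin n) → ℝ) (a : Fin n), (G.adjMatrix ℝ *ᵥ f) (Sum.inl a)
      = ∑ b, (G.adjMatrix ℝ) (Sum.inl a) (Sum.inr b) * f (Sum.inr b) := by
    intro f a
    rw [Matrix.mulVec, dotProduct, Fintype.sum_sum_type]
    have z : ∑ b, (G.adjMatrix ℝ) (Sum.inl a) (Sum.inl b) * f (Sum.inl b) = 0 :=
      Finset.sum_eq_zero (fun b _ => by simp [SimpleGraph.adjMatrix_apply, (hbip a b).1])
    rw [z, zero_add]
  have keyr : ∀ (f : (Fin n ⊕ Fin n) → ℝ) (a : Fin n), (G.adjMatrix ℝ *ᵥ f) (Sum.inr a)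
      = ∑ b, (G.adjMatrix ℝ) (Sum.inr a) (Sum.inl b) * f (Sum.inl b) := by
    intro f a
    rw [Matrix.mulVec, dotProduct, Fintype.sum_sum_type]
    have z : ∑ b, (G.adjMatrix ℝ) (Sum.inr a) (Sum.inr b) * f (Sum.inr b) = 0 :=
      Finset.sum_eq_zero (fun b _ => by simp [SimpleGraph.adjMatrix_apply, (hbip a b).2])
    rw [z, add_zero]
  have hvw : G.adjMatrix ℝ *ᵥ w = (Δ : ℝ) • w := by
    funext u
    cases u with
    | inl a =>
      have h1 := congrFun hv (Sum.inl a)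
      rw [keyl v a] at h1
      have h2 : (G.adjMatrix ℝ *ᵥ w) (Sum.inl a)
          = -∑ b, (G.adjMatrix ℝ) (Sum.inl a) (Sum.inr b) * v (Sum.inr b) := by
        rw [keyl w a, ← Finset.sum_neg_distrib]
        congr 1; funext b; simp only [w, Sum.elim_inr, mul_neg]
      rw [h2, h1]
      simp only [Pi.smul_apply, smul_eq_mul, w, Sum.elim_inl, neg_mul, neg_neg]
    | inr a =>
      have h1 := congrFun hv (Sum.inr a)
      rw [keyr v a] at h1
      have h2 : (G.adjMatrix ℝ *ᵥ w) (Sum.inr a)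
          = ∑ b, (G.adjMatrix ℝ) (Sum.inr a) (Sum.inl b) * v (Sum.inl b) := by
        rw [keyr w a]
        congr 1
      rw [h2, h1]
      simp only [Pi.smul_apply, smul_eq_mul, w, Sum.elim_inr, neg_mul, mul_neg]
  obtain ⟨c, hc⟩ := eig_const G hconn Δ hreg w hvw
  refine ⟨c, fun a => hc (Sum.inl a), fun a => ?_⟩
  have := hc (Sum.inr a)
  simp [w] at this
  linarith

lemma spec_bound {n : ℕ} (Δ : ℕ) (lam : ℝ) (hlam : 0 ≤ lam)
    (G : SimpleGraph (Fin n ⊕ Fin n)) [DecidableRel G.Adj]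
    (hconn : G.Connected)
    (hbip : ∀ a b : Fin n, ¬ G.Adj (Sum.inl a) (Sum.inl b) ∧ ¬ G.Adj (Sum.inr a) (Sum.inr b))
    (hreg : ∀ v, G.degree v = Δ)
    (hspec : ∀ μ ∈ spectrum ℝ (G.adjMatrix ℝ), μ ≠ (Δ : ℝ) → μ ≠ -(Δ : ℝ) → |μ| ≤ lam)
    (x y : (Fin n ⊕ Fin n) → ℝ)
    (hxr : ∀ b, x (Sum.inr b) = 0)
    (hxl : ∑ a, x (Sum.inl a) = 0) :
    |x ⬝ᵥ (G.adjMatrix ℝ *ᵥ y)| ≤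
      lam * Real.sqrt (∑ u, x u ^ 2) * Real.sqrt (∑ u, y u ^ 2) := by
  classical
  set A := G.adjMatrix ℝ with hA_def
  have hA : A.IsHermitian := by
    rw [Matrix.IsHermitian, Matrix.conjTranspose_eq_transpose_of_trivial]
    exact G.isSymm_adjMatrix
  set b := hA.eigenvectorBasis with hb
  set μ := hA.eigenvalues with hμ
  set X : EuclideanSpace ℝ (Fin n ⊕ Fin n) := (WithLp.equiv 2 _).symm x with hX
  set Y : EuclideanSpace ℝ (Fin n ⊕ Fin n) := (WithLp.equiv 2 _).symm y with hY
  set c : (Fin n ⊕ Fin n) → ℝ := fun i => inner ℝ X (b i) with hc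
  set d : (Fin n ⊕ Fin n) → ℝ := fun i => inner ℝ (b i) Y with hd
  -- expansion
  have hsymmetric : A.toEuclideanLin.IsSymmetric := Matrix.isHermitian_iff_isSymmetric.mp hA
  have hexp : x ⬝ᵥ (A *ᵥ y) = ∑ i, c i * (μ i * d i) := by
    have h1 : x ⬝ᵥ (A *ᵥ y) = inner ℝ X (A.toEuclideanLin Y) := by
      rw [Matrix.toEuclideanLin_apply]
      rw [EuclideanSpace.inner_eq_star_dotProduct]
      simp [hX, hY, dotProduct_comm]
    rw [h1, ← (b.sum_inner_mul_inner X (A.toEuclideanLin Y))]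
    congr 1
    funext i
    have h2 : inner ℝ (b i) (A.toEuclideanLin Y) = μ i * d i := by
      rw [← hsymmetric (b i) Y]
      have h3 : A.toEuclideanLin (b i) = (μ i) • (b i) := by
        apply (WithLp.equiv 2 _).injective
        simp only [WithLp.equiv_apply, Matrix.ofLp_toEuclideanLin_apply, WithLp.ofLp_smul]
        exact hA.mulVec_eigenvectorBasis i
      rw [h3, inner_smul_left]
      simp [hd]
    rw [h2]
  -- vanishing of bad terms
  have hinner : ∀ i, (c i : ℝ) = ∑ u, x u * (b i : EuclideanSpace ℝ _) u := by
    intro i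
    rw [hc]
    simp [EuclideanSpace.inner_eq_star_dotProduct, dotProduct, hX, mul_comm]
  have hxall : ∑ u, x u = 0 := by
    rw [Fintype.sum_sum_type]
    simp [hxr, hxl]
  have hterm : ∀ i, |c i * (μ i * d i)| ≤ lam * (|c i| * |d i|) := by
    intro i
    by_cases hμΔ : μ i = (Δ : ℝ)
    · -- top eigenvalue: c i = 0
      obtain ⟨k, hk⟩ := eig_const G hconn Δ hreg (b i) (by
        have hmv : A *ᵥ ⇑(b i) = μ i • ⇑(b i) := hA.mulVec_eigenvectorBasis i
        rwa [hμΔ] at hmv)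
      have : c i = 0 := by
        rw [hinner i]
        simp only [hk]
        rw [← Finset.sum_mul, hxall, zero_mul]
      rw [this]
      simp only [zero_mul, abs_zero]
      positivity
    · by_cases hμΔ' : μ i = -(Δ : ℝ)
      · obtain ⟨k, hk1, hk2⟩ := eig_neg Δ G hconn hbip hreg (b i) (by
          have hmv : A *ᵥ ⇑(b i) = μ i • ⇑(b i) := hA.mulVec_eigenvectorBasis i
          rwa [hμΔ'] at hmv)
        have : c i = 0 := by
          rw [hinner i, Fintype.sum_sum_type]
          simp only [hk1, hk2, hxr]
          rw [← Finset.sum_mul, hxl]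
          simp
        rw [this]
        simp only [zero_mul, abs_zero]
        positivity
      · have := hspec (μ i) (hA.eigenvalues_mem_spectrum_real i) hμΔ hμΔ'
        calc |c i * (μ i * d i)| = |μ i| * (|c i| * |d i|) := by
              rw [abs_mul, abs_mul]; ring
        _ ≤ lam * (|c i| * |d i|) := by
              apply mul_le_mul_of_nonneg_right this; positivity
  -- Parseval
  have hnormX : Real.sqrt (∑ i, c i ^ 2) = Real.sqrt (∑ u, x u ^ 2) := by
    have h1 : ∀ i, c i = b.repr X i := by
      intro i; rw [hc, b.repr_apply_apply, real_inner_comm]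
    have h2 : Real.sqrt (∑ i, c i ^ 2) = ‖b.repr X‖ := by
      rw [EuclideanSpace.norm_eq]
      congr 1
      refine Finset.sum_congr rfl fun i _ => ?_
      rw [h1 i, Real.norm_eq_abs, sq_abs]
    have h3 : Real.sqrt (∑ u, x u ^ 2) = ‖X‖ := by
      rw [EuclideanSpace.norm_eq]
      congr 1
      refine Finset.sum_congr rfl fun i _ => ?_
      rw [Real.norm_eq_abs, sq_abs]
      rfl
    rw [h2, h3, LinearIsometryEquiv.norm_map]
  have hnormY : Real.sqrt (∑ i, d i ^ 2) = Real.sqrt (∑ u, y u ^ 2) := by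
    have h1 : ∀ i, d i = b.repr Y i := by
      intro i; rw [hd, b.repr_apply_apply]
    have h2 : Real.sqrt (∑ i, d i ^ 2) = ‖b.repr Y‖ := by
      rw [EuclideanSpace.norm_eq]
      congr 1
      refine Finset.sum_congr rfl fun i _ => ?_
      rw [h1 i, Real.norm_eq_abs, sq_abs]
    have h3 : Real.sqrt (∑ u, y u ^ 2) = ‖Y‖ := by
      rw [EuclideanSpace.norm_eq]
      congr 1
      refine Finset.sum_congr rfl fun i _ => ?_
      rw [Real.norm_eq_abs, sq_abs]
      rfl
    rw [h2, h3, LinearIsometryEquiv.norm_map]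
  clear_value b μ X Y c d
  -- Cauchy-Schwarz
  have hCS : ∑ i, |c i| * |d i| ≤ Real.sqrt (∑ i, c i ^ 2) * Real.sqrt (∑ i, d i ^ 2) := by
    have h1 : (∑ i, |c i| * |d i|) ^ 2 ≤ (∑ i, c i ^ 2) * (∑ i, d i ^ 2) := by
      have := Finset.sum_mul_sq_le_sq_mul_sq Finset.univ (fun i => |c i|) (fun i => |d i|)
      simpa [sq_abs] using this
    have h2 : 0 ≤ ∑ i, |c i| * |d i| := by positivity
    calc ∑ i, |c i| * |d i| = Real.sqrt ((∑ i, |c i| * |d i|) ^ 2) := (Real.sqrt_sq h2).symm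
    _ ≤ Real.sqrt ((∑ i, c i ^ 2) * (∑ i, d i ^ 2)) := Real.sqrt_le_sqrt h1
    _ = Real.sqrt (∑ i, c i ^ 2) * Real.sqrt (∑ i, d i ^ 2) := by
        rw [Real.sqrt_mul (by positivity)]
  calc |x ⬝ᵥ (A *ᵥ y)| = |∑ i, c i * (μ i * d i)| := by rw [hexp]
  _ ≤ ∑ i, |c i * (μ i * d i)| := Finset.abs_sum_le_sum_abs _ _
  _ ≤ ∑ i, lam * (|c i| * |d i|) := Finset.sum_le_sum (fun i _ => hterm i)
  _ = lam * ∑ i, |c i| * |d i| := by rw [← Finset.mul_sum]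
  _ ≤ lam * (Real.sqrt (∑ i, c i ^ 2) * Real.sqrt (∑ i, d i ^ 2)) := by
      apply mul_le_mul_of_nonneg_left hCS hlam
  _ = lam * Real.sqrt (∑ u, x u ^ 2) * Real.sqrt (∑ u, y u ^ 2) := by
      rw [hnormX, hnormY]; ring

lemma edge_bound {n : ℕ} (hn : 0 < n) (Δ : ℕ) (lam : ℝ) (hlam : 0 ≤ lam)
    (G : SimpleGraph (Fin n ⊕ Fin n)) [DecidableRel G.Adj]
    (hconn : G.Connected)
    (hbip : ∀ a b : Fin n, ¬ G.Adj (Sum.inl a) (Sum.inl b) ∧ ¬ G.Adj (Sum.inr a) (Sum.inr b))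
    (hreg : ∀ v, G.degree v = Δ)
    (hspec : ∀ μ ∈ spectrum ℝ (G.adjMatrix ℝ), μ ≠ (Δ : ℝ) → μ ≠ -(Δ : ℝ) → |μ| ≤ lam)
    (S T : Finset (Fin n)) :
    (Δ : ℝ) * S.card * T.card / n - lam * (Real.sqrt S.card * Real.sqrt T.card)
      ≤ (((S ×ˢ T).filter (fun p => G.Adj (Sum.inl p.1) (Sum.inr p.2))).card : ℝ) := by
  classical
  set A := G.adjMatrix ℝ with hA_def
  have hn' : (n : ℝ) ≠ 0 := Nat.cast_ne_zero.mpr hn.ne'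
  set s : ℝ := (S.card : ℝ) with hs
  set t : ℝ := (T.card : ℝ) with ht
  set e₀ : (Fin n ⊕ Fin n) → ℝ := Sum.elim (fun _ => 1) (fun _ => 0) with he₀
  set e₁ : (Fin n ⊕ Fin n) → ℝ := Sum.elim (fun _ => 0) (fun _ => 1) with he₁
  set xS : (Fin n ⊕ Fin n) → ℝ :=
    Sum.elim (fun a => if a ∈ S then 1 else 0) (fun _ => 0) with hxS
  set yT : (Fin n ⊕ Fin n) → ℝ :=
    Sum.elim (fun _ => 0) (fun b => if b ∈ T then 1 else 0) with hyT
  set x : (Fin n ⊕ Fin n) → ℝ := xS - (s / n) • e₀ with hx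
  set y : (Fin n ⊕ Fin n) → ℝ := yT - (t / n) • e₁ with hy
  set N : ℝ := (((S ×ˢ T).filter (fun p => G.Adj (Sum.inl p.1) (Sum.inr p.2))).card : ℝ) with hN
  -- basic sums
  have hsum_indS : ∑ a : Fin n, (if a ∈ S then (1:ℝ) else 0) = s := by
    rw [Finset.sum_ite_mem, Finset.univ_inter, hs]
    simp
  have hsum_indT : ∑ b : Fin n, (if b ∈ T then (1:ℝ) else 0) = t := by
    rw [Finset.sum_ite_mem, Finset.univ_inter, ht]
    simp
  -- A acts on e₀, e₁
  have hrow : ∀ u, ∑ u', A u u' = (Δ : ℝ) := by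
    intro u
    have := G.adjMatrix_mulVec_const_apply (α := ℝ) (a := 1) (v := u)
    simp only [Matrix.mulVec, dotProduct, Function.const_apply, mul_one, hreg] at this
    exact this
  have hAe₁ : A *ᵥ e₁ = (Δ : ℝ) • e₀ := by
    funext u
    have expand : (A *ᵥ e₁) u = ∑ b, A u (Sum.inr b) := by
      rw [Matrix.mulVec, dotProduct, Fintype.sum_sum_type]
      simp [he₁]
    cases u with
    | inl a =>
      have h0 : ∀ b, A (Sum.inl a) (Sum.inl b) = 0 := fun b => by
        simp [hA_def, SimpleGraph.adjMatrix_apply, (hbip a b).1]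
      have := hrow (Sum.inl a)
      rw [Fintype.sum_sum_type] at this
      simp only [h0, Finset.sum_const_zero, zero_add] at this
      rw [expand, this]
      simp [he₀]
    | inr a =>
      have h0 : ∀ b, A (Sum.inr a) (Sum.inr b) = 0 := fun b => by
        simp [hA_def, SimpleGraph.adjMatrix_apply, (hbip a b).2]
      rw [expand]
      simp [h0, he₀]
  have hAe₀ : A *ᵥ e₀ = (Δ : ℝ) • e₁ := by
    funext u
    have expand : (A *ᵥ e₀) u = ∑ b, A u (Sum.inl b) := by
      rw [Matrix.mulVec, dotProduct, Fintype.sum_sum_type]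
      simp [he₀]
    cases u with
    | inl a =>
      have h0 : ∀ b, A (Sum.inl a) (Sum.inl b) = 0 := fun b => by
        simp [hA_def, SimpleGraph.adjMatrix_apply, (hbip a b).1]
      rw [expand]
      simp [h0, he₁]
    | inr a =>
      have h0 : ∀ b, A (Sum.inr a) (Sum.inr b) = 0 := fun b => by
        simp [hA_def, SimpleGraph.adjMatrix_apply, (hbip a b).2]
      have := hrow (Sum.inr a)
      rw [Fintype.sum_sum_type] at this
      simp only [h0, Finset.sum_const_zero, add_zero] at this
      rw [expand, this]
      simp [he₁]
  -- count identity
  have hQ1 : xS ⬝ᵥ (A *ᵥ yT) = N := by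
    rw [dotProduct, Fintype.sum_sum_type]
    have hz : ∀ a : Fin n, xS (Sum.inr a) * (A *ᵥ yT) (Sum.inr a) = 0 := by
      intro a; simp [hxS]
    simp only [hz, Finset.sum_const_zero, add_zero]
    have hmv : ∀ a : Fin n, (A *ᵥ yT) (Sum.inl a)
        = ∑ b, A (Sum.inl a) (Sum.inr b) * (if b ∈ T then 1 else 0) := by
      intro a
      rw [Matrix.mulVec, dotProduct, Fintype.sum_sum_type]
      simp [hyT]
    simp only [hmv, hxS, Sum.elim_inl]
    rw [hN]
    rw [Finset.card_filter]
    push_cast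
    rw [Finset.sum_product]
    have inner_eq : ∀ a : Fin n, (∑ b, A (Sum.inl a) (Sum.inr b) * (if b ∈ T then 1 else 0))
        = ∑ b ∈ T, (if G.Adj (Sum.inl a) (Sum.inr b) then (1:ℝ) else 0) := by
      intro a
      rw [← Finset.univ_inter T, ← Finset.sum_ite_mem]
      refine Finset.sum_congr rfl fun b _ => ?_
      by_cases hbT : b ∈ T <;> simp [hbT, hA_def, SimpleGraph.adjMatrix_apply]
    rw [← Finset.univ_inter S, ← Finset.sum_ite_mem]
    refine Finset.sum_congr rfl fun a _ => ?_
    by_cases haS : a ∈ S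
    · simp only [haS, if_true, one_mul, inner_eq a]
      simp [hA_def, SimpleGraph.adjMatrix_apply, Finset.sum_boole]
      exact fun h => absurd haS h
    · simp [haS]
  have hdotxSe₀ : xS ⬝ᵥ e₀ = s := by
    rw [dotProduct, Fintype.sum_sum_type]
    simp [hxS, he₀, hsum_indS]
  have hdotyTe₁ : e₁ ⬝ᵥ yT = t := by
    rw [dotProduct, Fintype.sum_sum_type]
    simp [hyT, he₁, hsum_indT]
  have hdote₀e₀ : e₀ ⬝ᵥ e₀ = (n : ℝ) := by
    rw [dotProduct, Fintype.sum_sum_type]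
    simp [he₀]
  have hQ2 : xS ⬝ᵥ (A *ᵥ e₁) = (Δ : ℝ) * s := by
    rw [hAe₁, dotProduct_smul, hdotxSe₀]
    simp
  have hQ3 : e₀ ⬝ᵥ (A *ᵥ yT) = (Δ : ℝ) * t := by
    rw [dotProduct_mulVec]
    have : e₀ ᵥ* A = A *ᵥ e₀ := by
      rw [hA_def]
      conv_lhs => rw [← G.transpose_adjMatrix (α := ℝ)]
      rw [Matrix.vecMul_transpose]
    rw [this, hAe₀, smul_dotProduct, hdotyTe₁]
    simp
  have hQ4 : e₀ ⬝ᵥ (A *ᵥ e₁) = (Δ : ℝ) * n := by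
    rw [hAe₁, dotProduct_smul, hdote₀e₀]
    simp
  -- decomposition
  have hdecomp : x ⬝ᵥ (A *ᵥ y) = N - (Δ : ℝ) * s * t / n := by
    rw [hx, hy, Matrix.mulVec_sub, Matrix.mulVec_smul, sub_dotProduct,
      smul_dotProduct, dotProduct_sub, dotProduct_sub,
      dotProduct_smul, dotProduct_smul, hQ1, hQ2, hQ3, hQ4]
    field_simp
    have hinv : (n:ℝ) * (n:ℝ)⁻¹ = 1 := mul_inv_cancel₀ hn'
    linear_combination ((Δ:ℝ) * s * t * ((n:ℝ) * (n:ℝ)⁻¹ - 1)) * hinv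
  -- side conditions
  have hxr : ∀ b, x (Sum.inr b) = 0 := fun b => by simp [hx, hxS, he₀]
  have hxl : ∑ a, x (Sum.inl a) = 0 := by
    simp only [hx, Pi.sub_apply, Pi.smul_apply, smul_eq_mul, hxS, Sum.elim_inl, he₀,
      Finset.sum_sub_distrib, hsum_indS]
    rw [Finset.sum_const]
    simp only [Finset.card_univ, Fintype.card_fin, nsmul_eq_mul]
    field_simp
    ring
  -- norms
  have hxnorm : ∑ u, x u ^ 2 ≤ s := by
    have hcard : s ≤ n := by rw [hs]; exact_mod_cast Finset.card_le_card (Finset.subset_univ S) |>.trans (by simp)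
    rw [Fintype.sum_sum_type]
    have h2 : ∀ b : Fin n, x (Sum.inr b) ^ 2 = 0 := fun b => by rw [hxr b]; ring
    simp only [h2, Finset.sum_const_zero, add_zero]
    have h3 : ∀ a : Fin n, x (Sum.inl a) ^ 2
        = (if a ∈ S then 1 else 0) - 2 * (s/n) * (if a ∈ S then 1 else 0) + (s/n)^2 := by
      intro a
      simp only [hx, Pi.sub_apply, Pi.smul_apply, smul_eq_mul, hxS, Sum.elim_inl, he₀, mul_one]
      by_cases haS : a ∈ S <;> simp [haS] <;> ring
    rw [Finset.sum_congr rfl (fun a _ => h3 a)]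
    rw [Finset.sum_add_distrib, Finset.sum_sub_distrib, hsum_indS, ← Finset.mul_sum, hsum_indS,
      Finset.sum_const]
    have hsn : 0 ≤ s := by rw [hs]; positivity
    have key : s - 2 * (s/n) * s + n * (s/n)^2 = s - s^2/n := by field_simp; ring
    simp only [Finset.card_univ, Fintype.card_fin, nsmul_eq_mul]
    rw [key]
    have hnpos : (0:ℝ) < n := by exact_mod_cast hn
    have := div_nonneg (sq_nonneg s) hnpos.le
    linarith
  have hynorm : ∑ u, y u ^ 2 ≤ t := by
    rw [Fintype.sum_sum_type]
    have h2 : ∀ b : Fin n, y (Sum.inl b) ^ 2 = 0 := fun b => by simp [hy, hyT, he₁]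
    simp only [h2, Finset.sum_const_zero, zero_add]
    have h3 : ∀ a : Fin n, y (Sum.inr a) ^ 2
        = (if a ∈ T then 1 else 0) - 2 * (t/n) * (if a ∈ T then 1 else 0) + (t/n)^2 := by
      intro a
      simp only [hy, Pi.sub_apply, Pi.smul_apply, smul_eq_mul, hyT, Sum.elim_inr, he₁, mul_one]
      by_cases haT : a ∈ T <;> simp [haT] <;> ring
    rw [Finset.sum_congr rfl (fun a _ => h3 a)]
    rw [Finset.sum_add_distrib, Finset.sum_sub_distrib, hsum_indT, ← Finset.mul_sum, hsum_indT,
      Finset.sum_const]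
    have htn : 0 ≤ t := by rw [ht]; positivity
    have key : t - 2 * (t/n) * t + n * (t/n)^2 = t - t^2/n := by field_simp; ring
    simp only [Finset.card_univ, Fintype.card_fin, nsmul_eq_mul]
    rw [key]
    have hnpos : (0:ℝ) < n := by exact_mod_cast hn
    have := div_nonneg (sq_nonneg t) hnpos.le
    linarith
  -- conclude
  have hspecb := spec_bound Δ lam hlam G hconn hbip hreg hspec x y hxr hxl
  have hb2 : |x ⬝ᵥ (A *ᵥ y)| ≤ lam * (Real.sqrt s * Real.sqrt t) := by
    refine hspecb.trans ?_
    rw [mul_assoc]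
    apply mul_le_mul_of_nonneg_left _ hlam
    have h1 : Real.sqrt (∑ u, x u ^ 2) ≤ Real.sqrt s := Real.sqrt_le_sqrt hxnorm
    have h2 : Real.sqrt (∑ u, y u ^ 2) ≤ Real.sqrt t := Real.sqrt_le_sqrt hynorm
    exact mul_le_mul h1 h2 (Real.sqrt_nonneg _) (Real.sqrt_nonneg _)
  have := abs_le.mp hb2
  rw [hdecomp] at this
  linarith [this.1]

end Aux

/-- If the popular spins of `σ` do not form a biclique of `H`, then `σ` has tiny weight. -/
theorem stmt8 (n q Δ : ℕ) (lam δ ε : ℝ) (hn : 0 < n) (hq : 2 ≤ q) (hΔ : 3 ≤ Δ)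
    (hlam0 : 0 < lam) (hlamΔ : lam < Δ) (hδ0 : 0 < δ) (hδ1 : δ < 1)
    (hε0 : 0 < ε) (hε1 : ε < 1)
    (hε2 : 2 * q * lam / Δ ≤ ε)
    (hε3 : 8 * q ^ 2 * Real.log q / (Δ * Real.log (1 / δ)) ≤ ε ^ 2)
    (H : Matrix (Fin q) (Fin q) ℝ) (hsymm : H.IsSymm) (hH : IsDeltaMatrix δ H)
    (G : SimpleGraph (Fin n ⊕ Fin n)) [DecidableRel G.Adj]
    (hconn : G.Connected)
    (hbip : ∀ a b : Fin n, ¬ G.Adj (Sum.inl a) (Sum.inl b) ∧ ¬ G.Adj (Sum.inr a) (Sum.inr b))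
    (hreg : ∀ v, G.degree v = Δ)
    (hspec : ∀ μ ∈ spectrum ℝ (G.adjMatrix ℝ), μ ≠ (Δ : ℝ) → μ ≠ -(Δ : ℝ) → |μ| ≤ lam)
    (σ : Fin n ⊕ Fin n → Fin q)
    (hnotbic : ¬ IsBiclique H (popularSpins0 ε σ) (popularSpins1 ε σ)) :
    bipWeight G H σ ≤ δ ^ ((Δ : ℝ) * ε ^ 2 * n / (2 * q ^ 2)) := by
  classical
  have hq0 : (0:ℝ) < q := by exact_mod_cast lt_of_lt_of_le two_pos hq
  have hΔ0 : (0:ℝ) < Δ := by exact_mod_cast lt_of_lt_of_le three_pos hΔ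
  have hn0 : (0:ℝ) < n := by exact_mod_cast hn
  -- extract a non-edge of H between popular spins
  rw [IsBiclique] at hnotbic
  push_neg at hnotbic
  obtain ⟨j₀, hj₀, j₁, hj₁, hne1⟩ := hnotbic
  have hHδ : H j₀ j₁ ≤ δ := (hH.2.2 j₀ j₁).resolve_left hne1
  set S : Finset (Fin n) := Finset.univ.filter (fun u => σ (Sum.inl u) = j₀) with hS
  set T : Finset (Fin n) := Finset.univ.filter (fun u => σ (Sum.inr u) = j₁) with hT
  have hsS : ε * n / q ≤ (S.card : ℝ) := by
    rw [popularSpins0, Finset.mem_filter] at hj₀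
    exact hj₀.2
  have htT : ε * n / q ≤ (T.card : ℝ) := by
    rw [popularSpins1, Finset.mem_filter] at hj₁
    exact hj₁.2
  set E : Finset (Fin n × Fin n) :=
    (S ×ˢ T).filter (fun p => G.Adj (Sum.inl p.1) (Sum.inr p.2)) with hE
  -- weight bound by edge count
  have hweight : bipWeight G H σ ≤ δ ^ (E.card) := by
    rw [bipWeight, ← Finset.prod_product']
    have hle : ∀ p ∈ Finset.univ ×ˢ Finset.univ,
        (if G.Adj (Sum.inl p.1) (Sum.inr p.2) then H (σ (Sum.inl p.1)) (σ (Sum.inr p.2)) else 1)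
        ≤ (if p ∈ E then δ else 1) := by
      intro p _
      by_cases hpE : p ∈ E
      · have hpE' := hpE
        rw [hE, Finset.mem_filter, Finset.mem_product] at hpE'
        obtain ⟨⟨hp1, hp2⟩, hadj⟩ := hpE'
        rw [hS, Finset.mem_filter] at hp1
        rw [hT, Finset.mem_filter] at hp2
        rw [if_pos hadj, if_pos hpE, hp1.2, hp2.2]
        exact hHδ
      · rw [if_neg hpE]
        by_cases hadj : G.Adj (Sum.inl p.1) (Sum.inr p.2)
        · rw [if_pos hadj]
          rcases hH.2.2 (σ (Sum.inl p.1)) (σ (Sum.inr p.2)) with h1 | h1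
          · rw [h1]
          · exact h1.trans hδ1.le
        · rw [if_neg hadj]
    have h0 : ∀ p ∈ Finset.univ ×ˢ Finset.univ, (0:ℝ) ≤
        (if G.Adj (Sum.inl p.1) (Sum.inr p.2) then H (σ (Sum.inl p.1)) (σ (Sum.inr p.2)) else 1) := by
      intro p _
      by_cases hadj : G.Adj (Sum.inl p.1) (Sum.inr p.2)
      · rw [if_pos hadj]; exact hH.1 _ _
      · rw [if_neg hadj]; exact zero_le_one
    calc (∏ p ∈ Finset.univ ×ˢ Finset.univ,
          if G.Adj (Sum.inl p.1) (Sum.inr p.2) then H (σ (Sum.inl p.1)) (σ (Sum.inr p.2)) else 1)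
        ≤ ∏ p ∈ Finset.univ ×ˢ Finset.univ, (if p ∈ E then δ else 1) :=
          Finset.prod_le_prod h0 hle
      _ = δ ^ E.card := by
          rw [Finset.prod_ite_mem]
          have : (Finset.univ ×ˢ Finset.univ) ∩ E = E := by
            apply Finset.inter_eq_right.mpr
            intro p _
            simp [Finset.mem_product]
          rw [this, Finset.prod_const]
  -- edge count lower bound
  have hedge := edge_bound hn Δ lam hlam0.le G hconn hbip hreg hspec S T
  set s : ℝ := (S.card : ℝ) with hs
  set t : ℝ := (T.card : ℝ) with ht
  set a : ℝ := ε * n / q with ha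
  have ha0 : 0 < a := by rw [ha]; positivity
  have hs0 : 0 < s := lt_of_lt_of_le ha0 hsS
  have ht0 : 0 < t := lt_of_lt_of_le ha0 htT
  have hst : a ^ 2 ≤ s * t := by
    rw [sq]
    exact mul_le_mul hsS htT ha0.le hs0.le
  have hsqrt_st : Real.sqrt s * Real.sqrt t = Real.sqrt (s * t) := (Real.sqrt_mul hs0.le t).symm
  have ha_le_sqrt : a ≤ Real.sqrt (s * t) := by
    rw [show a = Real.sqrt (a ^ 2) from (Real.sqrt_sq ha0.le).symm]
    exact Real.sqrt_le_sqrt hst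
  have hsqrt_le : Real.sqrt (s * t) ≤ s * t / a := by
    rw [le_div_iff₀ ha0]
    calc Real.sqrt (s * t) * a ≤ Real.sqrt (s * t) * Real.sqrt (s * t) :=
          mul_le_mul_of_nonneg_left ha_le_sqrt (Real.sqrt_nonneg _)
      _ = s * t := Real.mul_self_sqrt (by positivity)
  have hlamle : lam ≤ ε * Δ / (2 * q) := by
    rw [div_le_iff₀ hΔ0] at hε2
    rw [le_div_iff₀ (by positivity)]
    linarith
  have hcross : lam * (Real.sqrt s * Real.sqrt t) ≤ (Δ : ℝ) * (s * t) / (2 * n) := by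
    rw [hsqrt_st]
    calc lam * Real.sqrt (s * t) ≤ (ε * Δ / (2 * q)) * (s * t / a) :=
          mul_le_mul hlamle hsqrt_le (Real.sqrt_nonneg _) (by positivity)
      _ = (Δ : ℝ) * (s * t) / (2 * n) := by
          rw [ha]
          field_simp
  have hEcard : (Δ : ℝ) * ε ^ 2 * n / (2 * q ^ 2) ≤ (E.card : ℝ) := by
    have h1 : (Δ : ℝ) * s * t / n - lam * (Real.sqrt s * Real.sqrt t) ≤ (E.card : ℝ) := hedge
    have h2 : (Δ : ℝ) * (s * t) / (2 * n) ≤ (Δ : ℝ) * s * t / n - lam * (Real.sqrt s * Real.sqrt t) := by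
      have : (Δ : ℝ) * s * t / n - (Δ : ℝ) * (s * t) / (2 * n) = (Δ : ℝ) * (s * t) / (2 * n) := by
        field_simp
        ring
      linarith [hcross]
    have h3 : (Δ : ℝ) * ε ^ 2 * n / (2 * q ^ 2) ≤ (Δ : ℝ) * (s * t) / (2 * n) := by
      have heq : (Δ : ℝ) * a ^ 2 / (2 * n) = (Δ : ℝ) * ε ^ 2 * n / (2 * q ^ 2) := by
        rw [ha]
        field_simp
      rw [← heq]
      apply div_le_div_of_nonneg_right _ (by positivity)
      · exact mul_le_mul_of_nonneg_left hst (by positivity)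
    linarith
  calc bipWeight G H σ ≤ δ ^ (E.card) := hweight
    _ = δ ^ ((E.card : ℝ)) := (Real.rpow_natCast δ E.card).symm
    _ ≤ δ ^ ((Δ : ℝ) * ε ^ 2 * n / (2 * q ^ 2)) :=
        Real.rpow_le_rpow_of_exponent_ge hδ0 hδ1.le hEcard
end

section
/- Let G be a connected Δ-regular bipartite graph on 2n vertices with second eigenvalue at most λ, and let ε ∈ (0,1) with ε ≥ λ/Δ and n ≥ 1/(2ε²Δ). Then there is no set S ⊆ V(G) with |S| > 6εn all of whose G³-connected components have size at most 2εn. -/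
open Finset Matrix

/-- The cube `G³` of a graph: two distinct vertices are adjacent iff their distance
in `G` is at most 3. -/
def cubeGraph {V : Type*} (G : SimpleGraph V) : SimpleGraph V where
  Adj u v := u ≠ v ∧ G.dist u v ≤ 3
  symm := by
    constructor
    intro u v h
    exact ⟨h.1.symm, by rw [SimpleGraph.dist_comm]; exact h.2⟩
  loopless := ⟨fun v h => h.1 rfl⟩

section helpers

lemma split_lemma {ι : Type*} [DecidableEq ι] (F : Finset ι) (f : ι → ℝ) (M m : ℝ)
    (hm : 0 ≤ m) (hM : 0 ≤ M) (hf : ∀ i ∈ F, 0 ≤ f i ∧ f i ≤ M)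
    (htot : 2 * m + M < ∑ i ∈ F, f i) :
    ∃ J ⊆ F, m < ∑ i ∈ J, f i ∧ m < ∑ i ∈ F \ J, f i := by
  have hFP : F ∈ (F.powerset.filter (fun J => m < ∑ i ∈ J, f i)) := by
    simp only [Finset.mem_filter, Finset.mem_powerset]
    refine ⟨Finset.Subset.refl F, ?_⟩
    linarith
  obtain ⟨J, hJmem, hJmin⟩ := Finset.exists_min_image _ Finset.card ⟨F, hFP⟩
  simp only [Finset.mem_filter, Finset.mem_powerset] at hJmem
  obtain ⟨hJF, hJsum⟩ := hJmem
  refine ⟨J, hJF, hJsum, ?_⟩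
  have hJne : J.Nonempty := by
    rcases J.eq_empty_or_nonempty with h | h
    · exfalso; rw [h] at hJsum; simp at hJsum; linarith
    · exact h
  obtain ⟨i, hi⟩ := hJne
  have herase : ¬ (m < ∑ j ∈ J.erase i, f j) := by
    intro hcon
    have hmem : J.erase i ∈ (F.powerset.filter (fun J => m < ∑ i ∈ J, f i)) := by
      simp only [Finset.mem_filter, Finset.mem_powerset]
      exact ⟨(Finset.erase_subset i J).trans hJF, hcon⟩
    have := hJmin _ hmem
    have hc : (J.erase i).card < J.card := Finset.card_erase_lt_of_mem hi
    omega
  push_neg at herase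
  have hsplit : ∑ j ∈ J, f j = f i + ∑ j ∈ J.erase i, f j := (Finset.add_sum_erase J f hi).symm
  have hfiM : f i ≤ M := (hf i (hJF hi)).2
  have hJle : ∑ j ∈ J, f j ≤ M + m := by rw [hsplit]; linarith
  have hdiff : ∑ j ∈ F \ J, f j = (∑ j ∈ F, f j) - ∑ j ∈ J, f j :=
    Finset.sum_sdiff_eq_sub hJF
  rw [hdiff]; linarith

lemma walk_const {W : Type*} {G : SimpleGraph W} {f : W → ℝ} {c : ℝ}
    (step : ∀ u v, f u = c → G.Adj u v → f v = c) {a b : W} (w : G.Walk a b)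
    (ha : f a = c) : f b = c := by
  induction w with
  | nil => exact ha
  | cons h p ih => exact ih (step _ _ ha h)

lemma eig_top_const {W : Type*} [Fintype W] [DecidableEq W] [Nonempty W]
    (G : SimpleGraph W) [DecidableRel G.Adj] (hconn : G.Connected) {Δ : ℕ}
    (hreg : ∀ v, G.degree v = Δ) (f : W → ℝ)
    (hf : G.adjMatrix ℝ *ᵥ f = (Δ : ℝ) • f) : ∀ a b, f a = f b := by
  obtain ⟨a₀, -, hmax⟩ :=
    Finset.exists_max_image Finset.univ f ⟨Classical.arbitrary W, Finset.mem_univ _⟩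
  have step : ∀ u v, f u = f a₀ → G.Adj u v → f v = f a₀ := by
    intro u v hu huv
    by_contra hv
    have hvlt : f v < f a₀ := lt_of_le_of_ne (hmax v (Finset.mem_univ _)) hv
    have hsum : ∑ w ∈ G.neighborFinset u, f w = (Δ : ℝ) * f u := by
      have := congrFun hf u
      rw [SimpleGraph.adjMatrix_mulVec_apply] at this
      simpa using this
    have hlt : ∑ w ∈ G.neighborFinset u, f w < ∑ _w ∈ G.neighborFinset u, f a₀ := by
      apply Finset.sum_lt_sum
      · intro i _; exact hmax i (Finset.mem_univ _)
      · exact ⟨v, (G.mem_neighborFinset u v).2 huv, hvlt⟩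
    rw [Finset.sum_const, G.card_neighborFinset_eq_degree, hreg u, nsmul_eq_mul] at hlt
    rw [hsum, hu] at hlt
    exact lt_irrefl _ hlt
  intro a b
  have h1 : f a = f a₀ := by
    obtain ⟨w⟩ := (hconn a₀ a); exact walk_const step w rfl
  have h2 : f b = f a₀ := by
    obtain ⟨w⟩ := (hconn a₀ b); exact walk_const step w rfl
  rw [h1, h2]

lemma dot_sym {V : Type*} [Fintype V] (A : Matrix V V ℝ) (hA : A.IsSymm) (x y : V → ℝ) :
    x ⬝ᵥ (A *ᵥ y) = (A *ᵥ x) ⬝ᵥ y := by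
  rw [Matrix.dotProduct_mulVec]
  congr 1
  rw [← Matrix.mulVec_transpose, hA.eq]

lemma inner_eq_dot {V : Type*} [Fintype V] (x y : EuclideanSpace ℝ V) :
    (inner ℝ x y : ℝ) = (fun v => x v) ⬝ᵥ (fun v => y v) := by
  simp [PiLp.inner_apply, RCLike.inner_apply, dotProduct, mul_comm]

lemma dot_expand {V : Type*} [Fintype V] [DecidableEq V] {A : Matrix V V ℝ}
    (hA : A.IsHermitian) (x y : V → ℝ) :
    x ⬝ᵥ ((A * A) *ᵥ y) =
      ∑ i, (hA.eigenvalues i) ^ 2 *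
        ((x ⬝ᵥ ⇑(hA.eigenvectorBasis i)) * (y ⬝ᵥ ⇑(hA.eigenvectorBasis i))) := by
  classical
  set b := hA.eigenvectorBasis with hb
  have hsymm : A.IsSymm := by
    have := hA; rwa [Matrix.IsHermitian, Matrix.conjTranspose_eq_transpose_of_trivial] at this
  have hAA : (A * A).IsSymm := by
    rw [Matrix.IsSymm, Matrix.transpose_mul, hsymm.eq]
  let X : EuclideanSpace ℝ V := (WithLp.equiv 2 (V → ℝ)).symm x
  let Z : EuclideanSpace ℝ V := (WithLp.equiv 2 (V → ℝ)).symm ((A * A) *ᵥ y)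
  have key := b.sum_inner_mul_inner X Z
  have hXZ : (inner ℝ X Z : ℝ) = x ⬝ᵥ ((A * A) *ᵥ y) := by rw [inner_eq_dot]; rfl
  have hterm : ∀ i, (inner ℝ X (b i) : ℝ) * (inner ℝ (b i) Z : ℝ) =
      (hA.eigenvalues i) ^ 2 * ((x ⬝ᵥ ⇑(b i)) * (y ⬝ᵥ ⇑(b i))) := by
    intro i
    have h1 : (inner ℝ X (b i) : ℝ) = x ⬝ᵥ ⇑(b i) := by rw [inner_eq_dot]; rfl
    have h2 : (inner ℝ (b i) Z : ℝ) = ⇑(b i) ⬝ᵥ ((A * A) *ᵥ y) := by rw [inner_eq_dot]; rfl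
    have h3 : (A * A) *ᵥ ⇑(b i) = ((hA.eigenvalues i) ^ 2) • ⇑(b i) := by
      rw [← Matrix.mulVec_mulVec, hA.mulVec_eigenvectorBasis, Matrix.mulVec_smul,
        hA.mulVec_eigenvectorBasis, smul_smul, sq]
    rw [h1, h2, dot_sym _ hAA, h3]
    simp [smul_dotProduct, dotProduct_comm]
    ring
  rw [hXZ] at key
  rw [← key]
  exact Finset.sum_congr rfl (fun i _ => hterm i)

lemma dot_parseval {V : Type*} [Fintype V] [DecidableEq V] {A : Matrix V V ℝ}
    (hA : A.IsHermitian) (x : V → ℝ) :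
    x ⬝ᵥ x = ∑ i, (x ⬝ᵥ ⇑(hA.eigenvectorBasis i)) ^ 2 := by
  classical
  set b := hA.eigenvectorBasis with hb
  let X : EuclideanSpace ℝ V := (WithLp.equiv 2 (V → ℝ)).symm x
  have key := b.sum_inner_mul_inner X X
  have hXX : (inner ℝ X X : ℝ) = x ⬝ᵥ x := by rw [inner_eq_dot]; rfl
  have hterm : ∀ i, (inner ℝ X (b i) : ℝ) * (inner ℝ (b i) X : ℝ) = (x ⬝ᵥ ⇑(b i)) ^ 2 := by
    intro i
    have h1 : (inner ℝ X (b i) : ℝ) = x ⬝ᵥ ⇑(b i) := by rw [inner_eq_dot]; rfl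
    have h2 : (inner ℝ (b i) X : ℝ) = x ⬝ᵥ ⇑(b i) := by rw [real_inner_comm]; exact h1
    rw [h1, h2, sq]
  rw [hXX] at key
  rw [← key]
  exact Finset.sum_congr rfl (fun i _ => hterm i)

lemma dot_eq_zero_of_eig {V : Type*} [Fintype V] (A : Matrix V V ℝ) (hA : A.IsSymm)
    {f w : V → ℝ} {ν μ : ℝ} (hf : A *ᵥ f = ν • f) (hw : A *ᵥ w = μ • w) (hne : μ ≠ ν) :
    f ⬝ᵥ w = 0 := by
  have h1 : f ⬝ᵥ (A *ᵥ w) = μ * (f ⬝ᵥ w) := by rw [hw, dotProduct_smul]; simp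
  have h2 : f ⬝ᵥ (A *ᵥ w) = ν * (f ⬝ᵥ w) := by
    rw [Matrix.dotProduct_mulVec, ← Matrix.mulVec_transpose, hA.eq, hf, smul_dotProduct]
    simp
  have h3 : (μ - ν) * (f ⬝ᵥ w) = 0 := by linarith [h1, h2]
  rcases mul_eq_zero.1 h3 with h | h
  · exact absurd (by linarith : μ = ν) hne
  · exact h

lemma exists_pos_of_sum_pos {ι : Type*} (s : Finset ι) (f : ι → ℝ) (h : 0 < ∑ i ∈ s, f i) :
    ∃ i ∈ s, 0 < f i := by
  by_contra h'
  push_neg at h'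
  have := Finset.sum_nonpos h'
  linarith

lemma indicator_dot {V : Type*} [Fintype V] [DecidableEq V] (P : Finset V) (w : V → ℝ) :
    (fun u => if u ∈ P then (1 : ℝ) else 0) ⬝ᵥ w = ∑ u ∈ P, w u := by
  simp [dotProduct, ite_mul, Finset.sum_ite_mem]

/-- the sign vector: `+1` on the left part, `-1` on the right part. -/
def sgn (n : ℕ) : Fin n ⊕ Fin n → ℝ := Sum.elim (fun _ => 1) (fun _ => -1)

lemma sgn_neighbor {n : ℕ} {G : SimpleGraph (Fin n ⊕ Fin n)}
    (hbip : ∀ a b : Fin n, ¬ G.Adj (Sum.inl a) (Sum.inl b) ∧ ¬ G.Adj (Sum.inr a) (Sum.inr b))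
    {u v : Fin n ⊕ Fin n} (h : G.Adj u v) : sgn n v = - sgn n u := by
  cases u with
  | inl a => cases v with
    | inl b => exact absurd h (hbip a b).1
    | inr b => simp [sgn]
  | inr a => cases v with
    | inl b => simp [sgn]
    | inr b => exact absurd h (hbip a b).2

lemma mulVec_one {n : ℕ} {G : SimpleGraph (Fin n ⊕ Fin n)} [DecidableRel G.Adj] {Δ : ℕ}
    (hreg : ∀ v, G.degree v = Δ) :
    G.adjMatrix ℝ *ᵥ (fun _ => (1 : ℝ)) = (Δ : ℝ) • (fun _ => (1 : ℝ)) := by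
  funext u
  rw [SimpleGraph.adjMatrix_mulVec_apply, Finset.sum_const, G.card_neighborFinset_eq_degree,
    hreg u]
  simp

lemma mulVec_sgn {n : ℕ} {G : SimpleGraph (Fin n ⊕ Fin n)} [DecidableRel G.Adj] {Δ : ℕ}
    (hbip : ∀ a b : Fin n, ¬ G.Adj (Sum.inl a) (Sum.inl b) ∧ ¬ G.Adj (Sum.inr a) (Sum.inr b))
    (hreg : ∀ v, G.degree v = Δ) :
    G.adjMatrix ℝ *ᵥ sgn n = (-(Δ : ℝ)) • sgn n := by
  funext u
  rw [SimpleGraph.adjMatrix_mulVec_apply]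
  have h1 : ∀ w ∈ G.neighborFinset u, sgn n w = - sgn n u := by
    intro w hw
    exact sgn_neighbor hbip ((G.mem_neighborFinset u w).1 hw)
  rw [Finset.sum_congr rfl h1, Finset.sum_const, G.card_neighborFinset_eq_degree, hreg u]
  simp only [nsmul_eq_mul, Pi.smul_apply, smul_eq_mul]
  ring

lemma mulVec_sgn_mul {n : ℕ} {G : SimpleGraph (Fin n ⊕ Fin n)} [DecidableRel G.Adj] {Δ : ℕ}
    (hbip : ∀ a b : Fin n, ¬ G.Adj (Sum.inl a) (Sum.inl b) ∧ ¬ G.Adj (Sum.inr a) (Sum.inr b))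
    {f : Fin n ⊕ Fin n → ℝ}
    (hf : G.adjMatrix ℝ *ᵥ f = (-(Δ : ℝ)) • f) :
    G.adjMatrix ℝ *ᵥ (fun u => sgn n u * f u) = (Δ : ℝ) • (fun u => sgn n u * f u) := by
  funext u
  rw [SimpleGraph.adjMatrix_mulVec_apply]
  have h1 : ∀ w ∈ G.neighborFinset u, sgn n w * f w = (- sgn n u) * f w := by
    intro w hw
    rw [sgn_neighbor hbip ((G.mem_neighborFinset u w).1 hw)]
  rw [Finset.sum_congr rfl h1, ← Finset.mul_sum, ← SimpleGraph.adjMatrix_mulVec_apply, hf]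
  simp
  ring

end helpers

lemma final_numeric (lam ε nn Δr p1 p2 E : ℝ) (hlam0 : 0 < lam) (hlamε : lam ≤ ε * Δr)
    (hΔ0 : 0 < Δr) (hε0 : 0 < ε) (hε13 : ε < 1/3) (hn1 : 1 ≤ nn)
    (hp1 : ε * nn / 2 < p1) (hp2 : ε * nn / 2 < p2) (hE0 : 0 ≤ E) (hECS : E^2 ≤ p1 * p2) :
    lam^2 * E < Δr^2 * p1 * p2 * (1/nn) := by
  rw [mul_one_div, lt_div_iff₀ (by linarith : (0:ℝ) < nn)]
  have hεnn : 0 < ε * nn := by nlinarith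
  have hm0 : 0 < ε * nn / 2 := by linarith
  have hp12 : (ε*nn/2) * (ε*nn/2) < p1 * p2 :=
    mul_lt_mul'' hp1 hp2 (le_of_lt hm0) (le_of_lt hm0)
  have hb0 : 0 < p1 * p2 := lt_trans (mul_pos hm0 hm0) hp12
  have hεn : 0 < ε^2 * nn := by positivity
  have hεn2 : ε^2 * nn < ε * nn / 2 := by nlinarith
  have h2 : (ε^2*nn) * (ε^2*nn) < p1 * p2 :=
    lt_trans (mul_lt_mul'' hεn2 hεn2 (le_of_lt hεn) (le_of_lt hεn)) hp12
  have hq : (ε^2*nn*E)^2 ≤ ((ε^2*nn)*(ε^2*nn)) * (p1 * p2) := by nlinarith [sq_nonneg (ε^2*nn)]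
  have ha0 : 0 ≤ ε^2*nn*E := mul_nonneg (le_of_lt hεn) hE0
  have h3 : ε^2*nn*E < p1 * p2 := by nlinarith [hq, h2, ha0, hb0]
  have hlamsq : lam^2 ≤ ε^2 * Δr^2 := by nlinarith
  have hEnn : 0 ≤ E * nn := mul_nonneg hE0 (by linarith)
  nlinarith [mul_le_mul_of_nonneg_right hlamsq hEnn, mul_pos hΔ0 hΔ0,
    mul_lt_mul_of_pos_left h3 (mul_pos hΔ0 hΔ0)]

set_option maxHeartbeats 1600000 in
/-- Lemma on aggregate size of `G³`-small-component sets in bipartite expanders: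
no set of size `> 6εn` has all of its `G³`-connected components of size `≤ 2εn`. -/
theorem stmt14 (n Δ : ℕ) (lam ε : ℝ) (hn : 0 < n) (hΔ : 3 ≤ Δ) (hlam0 : 0 < lam)
    (hlamΔ : lam < Δ) (hε0 : 0 < ε) (hε1 : ε < 1) (hεlam : lam / Δ ≤ ε)
    (hnbig : 1 / (2 * ε ^ 2 * Δ) ≤ (n : ℝ))
    (G : SimpleGraph (Fin n ⊕ Fin n)) [DecidableRel G.Adj]
    (hconn : G.Connected)
    (hbip : ∀ a b : Fin n, ¬ G.Adj (Sum.inl a) (Sum.inl b) ∧ ¬ G.Adj (Sum.inr a) (Sum.inr b))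
    (hreg : ∀ v, G.degree v = Δ)
    (hspec : ∀ μ ∈ spectrum ℝ (G.adjMatrix ℝ), μ ≠ (Δ : ℝ) → μ ≠ -(Δ : ℝ) → |μ| ≤ lam) :
    ¬ ∃ S : Finset (Fin n ⊕ Fin n),
        6 * ε * n < (S.card : ℝ) ∧
        ∀ C : ((cubeGraph G).induce (S : Set (Fin n ⊕ Fin n))).ConnectedComponent,
          (Nat.card C.supp : ℝ) ≤ 2 * ε * n := by
  classical
  rintro ⟨S, hScard, hcomp⟩
  -- basic numeric facts
  have hn1 : (1 : ℝ) ≤ n := by exact_mod_cast hn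
  have hΔ0 : (0 : ℝ) < Δ := by
    have : (0 : ℕ) < Δ := by omega
    exact_mod_cast this
  have hlamε : lam ≤ ε * Δ := by
    rw [div_le_iff₀ hΔ0] at hεlam; linarith
  have hS2n : (S.card : ℝ) ≤ 2 * n := by
    have h1 := Finset.card_le_univ S
    rw [Fintype.card_sum, Fintype.card_fin] at h1
    have h3 : (S.card : ℝ) ≤ ((n + n : ℕ) : ℝ) := by exact_mod_cast h1
    push_cast at h3
    linarith
  have hε13 : ε < 1 / 3 := by nlinarith
  -- choose a side T of S with more than 3εn vertices, all on the same side
  obtain ⟨side, T, hTS, hTside, hTcard⟩ :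
      ∃ (side : Bool) (T : Finset (Fin n ⊕ Fin n)), T ⊆ S ∧
        (∀ u ∈ T, u.isLeft = side) ∧ 3 * ε * n < (T.card : ℝ) := by
    by_cases hL : 3 * ε * n < ((S.filter (fun u => u.isLeft = true)).card : ℝ)
    · exact ⟨true, S.filter (fun u => u.isLeft = true), Finset.filter_subset _ _,
        fun u hu => (Finset.mem_filter.1 hu).2, hL⟩
    · refine ⟨false, S.filter (fun u => u.isLeft = false), Finset.filter_subset _ _,
        fun u hu => (Finset.mem_filter.1 hu).2, ?_⟩
      push_neg at hL
      have hcards : (S.filter (fun u => u.isLeft = true)).card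
          + (S.filter (fun u => ¬ (u.isLeft = true))).card = S.card :=
        Finset.card_filter_add_card_filter_not _
      have heq : S.filter (fun u => ¬ (u.isLeft = true)) = S.filter (fun u => u.isLeft = false) := by
        apply Finset.filter_congr
        intro u _
        simp
      rw [heq] at hcards
      have : ((S.filter (fun u => u.isLeft = true)).card : ℝ)
          + ((S.filter (fun u => u.isLeft = false)).card : ℝ) = (S.card : ℝ) := by
        exact_mod_cast hcards
      linarith
  -- the induced cube graph and its components
  set H := (cubeGraph G).induce (S : Set (Fin n ⊕ Fin n)) with hH
  haveI : Fintype H.ConnectedComponent := Fintype.ofFinite _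
  set q : ↥(S : Set (Fin n ⊕ Fin n)) → H.ConnectedComponent := H.connectedComponentMk with hq
  set D : H.ConnectedComponent → Finset ↥(S : Set (Fin n ⊕ Fin n)) :=
    (fun C => Finset.univ.filter (fun v => ↑v ∈ T ∧ q v = C)) with hD
  have hDle : ∀ C, ((D C).card : ℝ) ≤ 2 * ε * n := by
    intro C
    refine le_trans ?_ (hcomp C)
    have hsub : ((D C : Finset _) : Set _) ⊆ C.supp := by
      intro v hv
      simp only [hD, Finset.coe_filter, Set.mem_setOf_eq, Finset.mem_univ, true_and] at hv
      exact (SimpleGraph.ConnectedComponent.mem_supp_iff _ _).2 hv.2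
    have h1 : Nat.card ((D C : Finset _) : Set _) ≤ Nat.card C.supp :=
      Nat.card_mono (Set.toFinite _) hsub
    rw [Nat.card_coe_set_eq, Set.ncard_coe_finset] at h1
    exact_mod_cast h1
  have hsumD : ∑ C, (D C).card = T.card := by
    have hfib := Finset.card_eq_sum_card_fiberwise
      (f := q) (s := Finset.univ.filter (fun v : ↥(S : Set (Fin n ⊕ Fin n)) => ↑v ∈ T))
      (t := Finset.univ) (fun x _ => Finset.mem_univ _)
    have hfil : ∀ C, (Finset.univ.filter
        (fun v : ↥(S : Set (Fin n ⊕ Fin n)) => ↑v ∈ T)).filter (fun v => q v = C) = D C := by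
      intro C
      rw [Finset.filter_filter]
    have hcardT : (Finset.univ.filter
        (fun v : ↥(S : Set (Fin n ⊕ Fin n)) => ↑v ∈ T)).card = T.card := by
      apply Finset.card_bij (fun (v : ↥(S : Set (Fin n ⊕ Fin n))) _ => (v : Fin n ⊕ Fin n))
      · intro a ha; exact (Finset.mem_filter.1 ha).2
      · intro a _ b _ hab; exact Subtype.ext hab
      · intro u hu
        refine ⟨⟨u, by exact_mod_cast hTS hu⟩, ?_, rfl⟩
        simp [hu]
    rw [hcardT] at hfib
    rw [hfib]
    refine Finset.sum_congr rfl (fun C _ => ?_)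
    congr 1
    ext v
    rw [hD]
    simp only [Finset.mem_filter, Finset.mem_univ, true_and]
  -- split the components into two groups
  obtain ⟨J, -, hJ1, hJ2⟩ := split_lemma Finset.univ (fun C => ((D C).card : ℝ))
    (2 * ε * n) (ε * n / 2) (by positivity) (by positivity)
    (fun C _ => ⟨by positivity, hDle C⟩)
    (by
      have : ∑ C, ((D C).card : ℝ) = (T.card : ℝ) := by exact_mod_cast hsumD
      rw [this]; linarith)
  set U₁ : Finset ↥(S : Set (Fin n ⊕ Fin n)) :=
    Finset.univ.filter (fun v => ↑v ∈ T ∧ q v ∈ J) with hU₁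
  set U₂ : Finset ↥(S : Set (Fin n ⊕ Fin n)) :=
    Finset.univ.filter (fun v => ↑v ∈ T ∧ q v ∉ J) with hU₂
  have hU₁card : (U₁.card : ℝ) = ∑ C ∈ J, ((D C).card : ℝ) := by
    have hfib := Finset.card_eq_sum_card_fiberwise (f := q) (s := U₁) (t := J)
      (fun x hx => (Finset.mem_filter.1 hx).2.2)
    rw [hfib]
    push_cast
    refine Finset.sum_congr rfl (fun C hC => ?_)
    norm_cast
    congr 1
    ext v
    rw [hU₁, hD]
    simp only [Finset.mem_filter, Finset.mem_univ, true_and, and_assoc]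
    constructor
    · rintro ⟨h1, -, h3⟩; exact ⟨h1, h3⟩
    · rintro ⟨h1, h3⟩; exact ⟨h1, h3 ▸ hC, h3⟩
  have hU₂card : (U₂.card : ℝ) = ∑ C ∈ Finset.univ \ J, ((D C).card : ℝ) := by
    have hfib := Finset.card_eq_sum_card_fiberwise (f := q) (s := U₂) (t := Finset.univ \ J)
      (fun x hx => by
        simp only [Finset.mem_coe, Finset.mem_sdiff, Finset.mem_univ, true_and]
        exact (Finset.mem_filter.1 hx).2.2)
    rw [hfib]
    push_cast
    refine Finset.sum_congr rfl (fun C hC => ?_)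
    have hCJ : C ∉ J := (Finset.mem_sdiff.1 hC).2
    norm_cast
    congr 1
    ext v
    rw [hU₂, hD]
    simp only [Finset.mem_filter, Finset.mem_univ, true_and, and_assoc]
    constructor
    · rintro ⟨h1, -, h3⟩; exact ⟨h1, h3⟩
    · rintro ⟨h1, h3⟩; exact ⟨h1, h3 ▸ hCJ, h3⟩
  set P₁ : Finset (Fin n ⊕ Fin n) := U₁.image Subtype.val with hP₁
  set P₂ : Finset (Fin n ⊕ Fin n) := U₂.image Subtype.val with hP₂
  have hP₁card : ε * n / 2 < (P₁.card : ℝ) := by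
    rw [hP₁, Finset.card_image_of_injective _ Subtype.val_injective]
    rw [hU₁card] at *
    linarith [hJ1]
  have hP₂card : ε * n / 2 < (P₂.card : ℝ) := by
    rw [hP₂, Finset.card_image_of_injective _ Subtype.val_injective]
    rw [hU₂card] at *
    linarith [hJ2]
  have hP₁T : ∀ u ∈ P₁, u ∈ T := by
    intro u hu
    obtain ⟨v, hv, rfl⟩ := Finset.mem_image.1 hu
    exact (Finset.mem_filter.1 hv).2.1
  have hP₂T : ∀ u ∈ P₂, u ∈ T := by
    intro u hu
    obtain ⟨v, hv, rfl⟩ := Finset.mem_image.1 hu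
    exact (Finset.mem_filter.1 hv).2.1
  -- separation: no two vertices of P₁, P₂ are within distance 2
  have hsep : ∀ u ∈ P₁, ∀ v ∈ P₂, ¬ (u ≠ v ∧ G.dist u v ≤ 3) := by
    rintro u hu v hv ⟨hne, hdist⟩
    obtain ⟨u', hu', rfl⟩ := Finset.mem_image.1 hu
    obtain ⟨v', hv', rfl⟩ := Finset.mem_image.1 hv
    have hqu : q u' ∈ J := (Finset.mem_filter.1 hu').2.2
    have hqv : q v' ∉ J := (Finset.mem_filter.1 hv').2.2
    have hadj : H.Adj u' v' := by
      show (cubeGraph G).Adj ↑u' ↑v'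
      exact And.intro hne hdist
    have : q u' = q v' := SimpleGraph.ConnectedComponent.sound hadj.reachable
    rw [this] at hqu
    exact hqv hqu
  -- ANALYTIC PART
  haveI : Nonempty (Fin n ⊕ Fin n) := ⟨Sum.inl ⟨0, hn⟩⟩
  set A := G.adjMatrix ℝ with hAdef
  have hsymm : A.IsSymm := SimpleGraph.isSymm_adjMatrix G
  have hA : A.IsHermitian := by
    rw [Matrix.IsHermitian, Matrix.conjTranspose_eq_transpose_of_trivial]
    exact hsymm
  set x : (Fin n ⊕ Fin n) → ℝ := fun u => if u ∈ P₁ then 1 else 0 with hxdef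
  set y : (Fin n ⊕ Fin n) → ℝ := fun u => if u ∈ P₂ then 1 else 0 with hydef
  set big : Finset (Fin n ⊕ Fin n) :=
    Finset.univ.filter (fun i => hA.eigenvalues i = (Δ : ℝ) ∨ hA.eigenvalues i = -(Δ : ℝ))
    with hbigdef
  -- eigenvectors with eigenvalue ±Δ are constant on the chosen side
  have hKappa : ∀ i, ∃ κ : ℝ, i ∈ big →
      ∀ u : Fin n ⊕ Fin n, u.isLeft = side → ⇑(hA.eigenvectorBasis i) u = κ := by
    intro i
    by_cases hib : i ∈ big
    · rw [hbigdef, Finset.mem_filter] at hib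
      rcases hib.2 with hpos | hneg
      · refine ⟨⇑(hA.eigenvectorBasis i) (Sum.inl ⟨0, hn⟩), fun _ u _ => ?_⟩
        have hconst := eig_top_const G hconn hreg ⇑(hA.eigenvectorBasis i)
          (by rw [hA.mulVec_eigenvectorBasis i, hpos])
        exact hconst u _
      · have hg := mulVec_sgn_mul (Δ := Δ) hbip (f := ⇑(hA.eigenvectorBasis i))
          (by rw [hA.mulVec_eigenvectorBasis i, hneg])
        have hconst := eig_top_const G hconn hreg
          (fun u => sgn n u * ⇑(hA.eigenvectorBasis i) u) hg
        cases side with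
        | true =>
          refine ⟨sgn n (Sum.inl ⟨0, hn⟩) * ⇑(hA.eigenvectorBasis i) (Sum.inl ⟨0, hn⟩),
            fun _ u hu => ?_⟩
          cases u with
          | inl a =>
            have h := hconst (Sum.inl a) (Sum.inl ⟨0, hn⟩)
            simp only [sgn, Sum.elim_inl, one_mul] at h ⊢
            exact h
          | inr a => simp at hu
        | false =>
          refine ⟨-(sgn n (Sum.inl ⟨0, hn⟩) * ⇑(hA.eigenvectorBasis i) (Sum.inl ⟨0, hn⟩)),
            fun _ u hu => ?_⟩
          cases u with
          | inl a => simp at hu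
          | inr a =>
            have h := hconst (Sum.inr a) (Sum.inl ⟨0, hn⟩)
            simp only [sgn, Sum.elim_inl, Sum.elim_inr, one_mul, neg_mul] at h ⊢
            linarith
    · exact ⟨0, fun h => absurd h hib⟩
  choose κ hκ using hKappa
  -- dot products of indicators with eigenvectors on big eigenvalues
  have hcbig : ∀ i ∈ big, x ⬝ᵥ ⇑(hA.eigenvectorBasis i) = P₁.card * κ i := by
    intro i hi
    rw [hxdef, indicator_dot P₁ ⇑(hA.eigenvectorBasis i)]
    rw [Finset.sum_congr rfl (fun u hu => hκ i hi u (hTside u (hP₁T u hu))),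
      Finset.sum_const, nsmul_eq_mul]
  have hdbig : ∀ i ∈ big, y ⬝ᵥ ⇑(hA.eigenvectorBasis i) = P₂.card * κ i := by
    intro i hi
    rw [hydef, indicator_dot P₂ ⇑(hA.eigenvectorBasis i)]
    rw [Finset.sum_congr rfl (fun u hu => hκ i hi u (hTside u (hP₂T u hu))),
      Finset.sum_const, nsmul_eq_mul]
  -- the side indicator vector
  set e : (Fin n ⊕ Fin n) → ℝ := fun u => if u.isLeft = side then 1 else 0 with hedef
  have hee : e ⬝ᵥ e = (n : ℝ) := by
    rw [hedef]
    cases side <;> simp [dotProduct, Fintype.sum_sum_type]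
  have hebig : ∀ i ∈ big, e ⬝ᵥ ⇑(hA.eigenvectorBasis i) = n * κ i := by
    intro i hi
    have hκi := hκ i hi
    rw [hedef]
    cases side with
    | true =>
      have h1 : (fun u : Fin n ⊕ Fin n => if u.isLeft = true then (1:ℝ) else 0)
          ⬝ᵥ ⇑(hA.eigenvectorBasis i) = ∑ a : Fin n, ⇑(hA.eigenvectorBasis i) (Sum.inl a) := by
        simp [dotProduct, Fintype.sum_sum_type]
      rw [h1, Finset.sum_congr rfl (fun a _ => hκi (Sum.inl a) (by simp)),
        Finset.sum_const, nsmul_eq_mul]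
      simp
    | false =>
      have h1 : (fun u : Fin n ⊕ Fin n => if u.isLeft = false then (1:ℝ) else 0)
          ⬝ᵥ ⇑(hA.eigenvectorBasis i) = ∑ a : Fin n, ⇑(hA.eigenvectorBasis i) (Sum.inr a) := by
        simp [dotProduct, Fintype.sum_sum_type]
      rw [h1, Finset.sum_congr rfl (fun a _ => hκi (Sum.inr a) (by simp)),
        Finset.sum_const, nsmul_eq_mul]
      simp
  have hesmall : ∀ i ∉ big, e ⬝ᵥ ⇑(hA.eigenvectorBasis i) = 0 := by
    intro i hi
    rw [hbigdef, Finset.mem_filter] at hi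
    push_neg at hi
    obtain ⟨hne1, hne2⟩ := hi (Finset.mem_univ i)
    have h1 : (fun _ : Fin n ⊕ Fin n => (1:ℝ)) ⬝ᵥ ⇑(hA.eigenvectorBasis i) = 0 :=
      dot_eq_zero_of_eig A hsymm (mulVec_one hreg) (hA.mulVec_eigenvectorBasis i) hne1
    have h2 : sgn n ⬝ᵥ ⇑(hA.eigenvectorBasis i) = 0 :=
      dot_eq_zero_of_eig A hsymm (mulVec_sgn hbip hreg) (hA.mulVec_eigenvectorBasis i) hne2
    have hpt : ∀ u : Fin n ⊕ Fin n,
        e u = (1 + (if side then (1:ℝ) else -1) * sgn n u) / 2 := by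
      intro u
      rw [hedef]
      cases u <;> cases side <;> norm_num [sgn]
    have h3 : e ⬝ᵥ ⇑(hA.eigenvectorBasis i) =
        ((fun _ : Fin n ⊕ Fin n => (1:ℝ)) ⬝ᵥ ⇑(hA.eigenvectorBasis i)
          + (if side then (1:ℝ) else -1) * (sgn n ⬝ᵥ ⇑(hA.eigenvectorBasis i))) / 2 := by
      simp only [dotProduct]
      rw [Finset.mul_sum, ← Finset.sum_add_distrib, Finset.sum_div]
      refine Finset.sum_congr rfl (fun u _ => ?_)
      rw [hpt u]
      ring
    rw [h3, h1, h2]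
    ring
  -- Parseval for e gives the mass of κ² on big eigenvalues
  have hκsum : ∑ i ∈ big, (κ i) ^ 2 = 1 / n := by
    have hpars := dot_parseval hA e
    rw [hee] at hpars
    have hsplit := Finset.sum_filter_add_sum_filter_not Finset.univ
      (fun i => hA.eigenvalues i = (Δ:ℝ) ∨ hA.eigenvalues i = -(Δ:ℝ))
      (fun i => (e ⬝ᵥ ⇑(hA.eigenvectorBasis i)) ^ 2)
    have hz : ∑ i ∈ Finset.univ.filter
        (fun i => ¬(hA.eigenvalues i = (Δ:ℝ) ∨ hA.eigenvalues i = -(Δ:ℝ))),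
        (e ⬝ᵥ ⇑(hA.eigenvectorBasis i)) ^ 2 = 0 := by
      refine Finset.sum_eq_zero (fun i hi => ?_)
      have : i ∉ big := by
        rw [hbigdef]
        simp only [Finset.mem_filter, Finset.mem_univ, true_and] at hi ⊢
        exact hi
      rw [hesmall i this]
      ring
    have hb : ∑ i ∈ big, (e ⬝ᵥ ⇑(hA.eigenvectorBasis i)) ^ 2
        = ∑ i ∈ big, (n:ℝ)^2 * (κ i)^2 := by
      refine Finset.sum_congr rfl (fun i hi => ?_)
      rw [hebig i hi]
      ring
    rw [hbigdef] at hb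
    rw [← hsplit, hz, add_zero, hb, ← Finset.mul_sum] at hpars
    rw [hbigdef]
    have hn0 : (n:ℝ) ≠ 0 := by positivity
    rw [eq_div_iff hn0]
    exact mul_left_cancel₀ hn0 (by linear_combination -hpars)
  -- Parseval for x and y
  have hparsx : ∑ i, (x ⬝ᵥ ⇑(hA.eigenvectorBasis i)) ^ 2 = P₁.card := by
    rw [← dot_parseval hA x, hxdef, indicator_dot P₁]
    have hone : ∀ u ∈ P₁, (if u ∈ P₁ then (1:ℝ) else 0) = 1 := fun u hu => if_pos hu
    rw [Finset.sum_congr rfl hone, Finset.sum_const, nsmul_eq_mul, mul_one]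
  have hparsy : ∑ i, (y ⬝ᵥ ⇑(hA.eigenvectorBasis i)) ^ 2 = P₂.card := by
    rw [← dot_parseval hA y, hydef, indicator_dot P₂]
    have hone : ∀ u ∈ P₂, (if u ∈ P₂ then (1:ℝ) else 0) = 1 := fun u hu => if_pos hu
    rw [Finset.sum_congr rfl hone, Finset.sum_const, nsmul_eq_mul, mul_one]
  -- abbreviation for the error mass
  set E : ℝ := ∑ i, |x ⬝ᵥ ⇑(hA.eigenvectorBasis i)| * |y ⬝ᵥ ⇑(hA.eigenvectorBasis i)|
    with hEdef
  have hE0 : 0 ≤ E := by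
    rw [hEdef]
    exact Finset.sum_nonneg (fun i _ => mul_nonneg (abs_nonneg _) (abs_nonneg _))
  have hECS : E ^ 2 ≤ (P₁.card : ℝ) * P₂.card := by
    have h := Finset.sum_mul_sq_le_sq_mul_sq Finset.univ
      (fun i => |x ⬝ᵥ ⇑(hA.eigenvectorBasis i)|) (fun i => |y ⬝ᵥ ⇑(hA.eigenvectorBasis i)|)
    simp only [sq_abs] at h
    rw [hparsx, hparsy] at h
    rw [hEdef]
    exact h
  -- contribution of the big eigenvalues
  have hmain : ∑ i ∈ big, hA.eigenvalues i ^ 2 *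
      ((x ⬝ᵥ ⇑(hA.eigenvectorBasis i)) * (y ⬝ᵥ ⇑(hA.eigenvectorBasis i)))
      = (Δ:ℝ)^2 * P₁.card * P₂.card * (1 / n) := by
    have hterm : ∀ i ∈ big, hA.eigenvalues i ^ 2 *
        ((x ⬝ᵥ ⇑(hA.eigenvectorBasis i)) * (y ⬝ᵥ ⇑(hA.eigenvectorBasis i)))
        = (Δ:ℝ)^2 * P₁.card * P₂.card * (κ i)^2 := by
      intro i hi
      have hμ2 : hA.eigenvalues i ^ 2 = (Δ:ℝ)^2 := by
        have := hi
        rw [hbigdef, Finset.mem_filter] at this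
        rcases this.2 with h | h <;> rw [h] <;> ring
      rw [hμ2, hcbig i hi, hdbig i hi]
      ring
    calc ∑ i ∈ big, hA.eigenvalues i ^ 2 *
        ((x ⬝ᵥ ⇑(hA.eigenvectorBasis i)) * (y ⬝ᵥ ⇑(hA.eigenvectorBasis i)))
        = ∑ i ∈ big, (Δ:ℝ)^2 * P₁.card * P₂.card * (κ i)^2 := Finset.sum_congr rfl hterm
      _ = (Δ:ℝ)^2 * P₁.card * P₂.card * ∑ i ∈ big, (κ i)^2 := by rw [Finset.mul_sum]
      _ = (Δ:ℝ)^2 * P₁.card * P₂.card * (1/n) := by rw [hκsum]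
  -- the small eigenvalues contribute at least -(lam² E)
  have hrest : -(lam^2 * E) ≤ ∑ i ∈ Finset.univ.filter
      (fun i => ¬(hA.eigenvalues i = (Δ:ℝ) ∨ hA.eigenvalues i = -(Δ:ℝ))),
      hA.eigenvalues i ^ 2 *
        ((x ⬝ᵥ ⇑(hA.eigenvectorBasis i)) * (y ⬝ᵥ ⇑(hA.eigenvectorBasis i))) := by
    have hterm : ∀ i ∈ Finset.univ.filter
        (fun i => ¬(hA.eigenvalues i = (Δ:ℝ) ∨ hA.eigenvalues i = -(Δ:ℝ))),
        -(lam^2 * (|x ⬝ᵥ ⇑(hA.eigenvectorBasis i)| * |y ⬝ᵥ ⇑(hA.eigenvectorBasis i)|)) ≤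
        hA.eigenvalues i ^ 2 *
          ((x ⬝ᵥ ⇑(hA.eigenvectorBasis i)) * (y ⬝ᵥ ⇑(hA.eigenvectorBasis i))) := by
      intro i hi
      rw [Finset.mem_filter] at hi
      have hne := hi.2
      push_neg at hne
      obtain ⟨hne1, hne2⟩ := hne
      have hμ : |hA.eigenvalues i| ≤ lam :=
        hspec _ (hA.eigenvalues_mem_spectrum_real i) hne1 hne2
      have habs : |hA.eigenvalues i ^ 2 *
          ((x ⬝ᵥ ⇑(hA.eigenvectorBasis i)) * (y ⬝ᵥ ⇑(hA.eigenvectorBasis i)))| ≤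
          lam^2 * (|x ⬝ᵥ ⇑(hA.eigenvectorBasis i)| * |y ⬝ᵥ ⇑(hA.eigenvectorBasis i)|) := by
        rw [abs_mul, abs_mul, abs_pow, sq_abs]
        have h1 : hA.eigenvalues i ^ 2 ≤ lam ^ 2 := by
          nlinarith [abs_nonneg (hA.eigenvalues i), neg_abs_le (hA.eigenvalues i),
            le_abs_self (hA.eigenvalues i)]
        have h2 : (0:ℝ) ≤ |x ⬝ᵥ ⇑(hA.eigenvectorBasis i)| * |y ⬝ᵥ ⇑(hA.eigenvectorBasis i)| :=
          mul_nonneg (abs_nonneg _) (abs_nonneg _)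
        exact mul_le_mul_of_nonneg_right h1 h2
      have hnal := neg_abs_le (hA.eigenvalues i ^ 2 *
        ((x ⬝ᵥ ⇑(hA.eigenvectorBasis i)) * (y ⬝ᵥ ⇑(hA.eigenvectorBasis i))))
      linarith
    have hsub : ∑ i ∈ Finset.univ.filter
        (fun i => ¬(hA.eigenvalues i = (Δ:ℝ) ∨ hA.eigenvalues i = -(Δ:ℝ))),
        |x ⬝ᵥ ⇑(hA.eigenvectorBasis i)| * |y ⬝ᵥ ⇑(hA.eigenvectorBasis i)| ≤ E := by
      rw [hEdef]
      exact Finset.sum_le_sum_of_subset_of_nonneg (Finset.filter_subset _ _)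
        (fun i _ _ => mul_nonneg (abs_nonneg _) (abs_nonneg _))
    have hstep : lam^2 * (∑ i ∈ Finset.univ.filter
        (fun i => ¬(hA.eigenvalues i = (Δ:ℝ) ∨ hA.eigenvalues i = -(Δ:ℝ))),
        |x ⬝ᵥ ⇑(hA.eigenvectorBasis i)| * |y ⬝ᵥ ⇑(hA.eigenvectorBasis i)|) ≤ lam^2 * E :=
      mul_le_mul_of_nonneg_left hsub (sq_nonneg lam)
    calc -(lam^2 * E) ≤ -(lam^2 * ∑ i ∈ Finset.univ.filter
          (fun i => ¬(hA.eigenvalues i = (Δ:ℝ) ∨ hA.eigenvalues i = -(Δ:ℝ))),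
          |x ⬝ᵥ ⇑(hA.eigenvectorBasis i)| * |y ⬝ᵥ ⇑(hA.eigenvectorBasis i)|) := by linarith
      _ = ∑ i ∈ Finset.univ.filter
          (fun i => ¬(hA.eigenvalues i = (Δ:ℝ) ∨ hA.eigenvalues i = -(Δ:ℝ))),
          -(lam^2 * (|x ⬝ᵥ ⇑(hA.eigenvectorBasis i)| * |y ⬝ᵥ ⇑(hA.eigenvectorBasis i)|)) := by
        rw [Finset.mul_sum, ← Finset.sum_neg_distrib]
      _ ≤ _ := Finset.sum_le_sum hterm
  -- positivity of the quadratic form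
  have hpos : 0 < x ⬝ᵥ ((A * A) *ᵥ y) := by
    have hdecomp := Finset.sum_filter_add_sum_filter_not Finset.univ
      (fun i => hA.eigenvalues i = (Δ:ℝ) ∨ hA.eigenvalues i = -(Δ:ℝ))
      (fun i => hA.eigenvalues i ^ 2 *
        ((x ⬝ᵥ ⇑(hA.eigenvectorBasis i)) * (y ⬝ᵥ ⇑(hA.eigenvectorBasis i))))
    rw [dot_expand hA x y, ← hdecomp]
    have hm := hmain
    rw [hbigdef] at hm
    rw [hm]
    have hnum : lam^2 * E < (Δ:ℝ)^2 * P₁.card * P₂.card * (1/n) :=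
      final_numeric lam ε n Δ P₁.card P₂.card E hlam0 hlamε hΔ0 hε0 hε13 hn1
        hP₁card hP₂card hE0 hECS
    linarith
  -- extract two adjacent-within-2 vertices across the two groups
  obtain ⟨u, -, hu⟩ := exists_pos_of_sum_pos Finset.univ
    (fun u => x u * ((A * A) *ᵥ y) u) hpos
  have hu1 : u ∈ P₁ := by
    by_contra hc
    rw [hxdef] at hu
    simp only [if_neg hc, zero_mul] at hu
    exact lt_irrefl _ hu
  have hxu : x u = 1 := by rw [hxdef]; exact if_pos hu1
  rw [hxu, one_mul] at hu
  obtain ⟨v, -, hv⟩ := exists_pos_of_sum_pos Finset.univ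
    (fun v => (A * A) u v * y v) hu
  have hv2 : v ∈ P₂ := by
    by_contra hc
    rw [hydef] at hv
    simp only [if_neg hc, mul_zero] at hv
    exact lt_irrefl _ hv
  have hyv : y v = 1 := by rw [hydef]; exact if_pos hv2
  rw [hyv, mul_one] at hv
  rw [Matrix.mul_apply] at hv
  obtain ⟨w, -, hw⟩ := exists_pos_of_sum_pos Finset.univ (fun w => A u w * A w v) hv
  have hadj1 : G.Adj u w := by
    by_contra hc
    rw [hAdef] at hw
    simp only [SimpleGraph.adjMatrix_apply, if_neg hc, zero_mul] at hw
    exact lt_irrefl _ hw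
  have hadj2 : G.Adj w v := by
    by_contra hc
    rw [hAdef] at hw
    simp only [SimpleGraph.adjMatrix_apply, if_neg hc, mul_zero] at hw
    exact lt_irrefl _ hw
  have hdist : G.dist u v ≤ 3 := by
    have h := SimpleGraph.dist_le
      (SimpleGraph.Walk.cons hadj1 (SimpleGraph.Walk.cons hadj2 SimpleGraph.Walk.nil))
    simp only [SimpleGraph.Walk.length_cons, SimpleGraph.Walk.length_nil] at h
    omega
  have hne : u ≠ v := by
    intro h
    subst h
    obtain ⟨u', hu', hval⟩ := Finset.mem_image.1 hu1
    obtain ⟨v', hv', hval2⟩ := Finset.mem_image.1 hv2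
    have heq : u' = v' := Subtype.ext (hval.trans hval2.symm)
    subst heq
    exact (Finset.mem_filter.1 hv').2.2 (Finset.mem_filter.1 hu').2.2
  exact hsep u hu1 v hv2 ⟨hne, hdist⟩
end
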